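/- Consider, for i = 1,…,n, the neutral high-order Hopfield difference system on ℤ: xᵢ(t) − xᵢ(t−1) = −cᵢ(t)·xᵢ(t − δᵢ(t)) + Σ_{j=1}^{n} a_{ij}(t)·f_j(x_j(t)) + Σ_{j=1}^{n} b_{ij}(t)·g_j(x_j(t − τ_{ij}(t))) + Σ_{j=1}^{n} d_{ij}(t)·Σ_{s=t−σ_{ij}(t)+1}^{t} h_j(x_j(s) − x_j(s−1)) + Σ_{j=1}^{n} Σ_{l=1}^{n} T_{ijl}(t)·k_j(x_j(t − ξ_{ijl}(t)))·k_l(x_l(t − ζ_{ijl}(t))) + Iᵢ(t). Assume: (H1) each cᵢ : ℤ → ℝ is almost periodic with cᵢ⁻ := inf_t cᵢ(t) > 0 and cᵢ⁺ := sup_t cᵢ(t); (H2) each a_{ij}, b_{ij}, d_{ij}, T_{ijl} : ℤ → ℝ is an almost periodic sequence with suprema of absolute values a_{ij}⁺ etc., each delay δᵢ, τ_{ij}, σ_{ij}, ξ_{ijl}, ζ_{ijl} : ℤ → ℕ is a bounded almost periodic sequence of nonnegative integers with suprema δᵢ⁺, τ_{ij}⁺, σ_{ij}⁺, ξ_{ijl}⁺,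 ζ_{ijl}⁺, and each Iᵢ : ℤ → ℝ is pseudo almost periodic with Iᵢ⁺ := sup_t |Iᵢ(t)|; (H3) f_j, g_j, h_j, k_j : ℝ → ℝ are Lipschitz with constants L_j^f, L_j^g, L_j^h, L_j^k and vanish at 0; (H4) there exists r > 0 such that, setting ρᵢ := (cᵢ⁺δᵢ⁺ + Σ_j a_{ij}⁺L_j^f + Σ_j b_{ij}⁺L_j^g + Σ_j d_{ij}⁺σ_{ij}⁺L_j^h + 2r·Σ_jΣ_l T_{ijl}⁺L_j^kL_l^k)·r, K₁ := max_i Iᵢ⁺/cᵢ⁻, K₂ := max_i ((cᵢ⁺+cᵢ⁻)/cᵢ⁻)·Iᵢ⁺, one has max_i max{ρᵢ/cᵢ⁻, ((cᵢ⁺+cᵢ⁻)/cᵢ⁻)·ρᵢ} + max{K₁, K₂} ≤ r and 0 < ρᵢ/r < cᵢ⁻/(cᵢ⁺+cᵢ⁻) < cᵢ⁻ for every i. Then the system has a solution x = (x₁,…,x_n) : ℤ → ℝⁿ such that each xᵢ and each backward difference ∇xᵢ(t) := xᵢ(t) − xᵢ(t−1) is pseudo almost periodic and sup_{t∈ℤ}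 max_i max{|xᵢ(t)|, |∇xᵢ(t)|} ≤ r; moreover, this solution is unique among all such solutions within this bound. -/

import Mathlib

/-- A sequence `g : ℤ → ℝ` is almost periodic if for every `ε > 0` there is a positive
integer `l` such that among any `l` consecutive integers there is a `τ` with
`|g (t + τ) - g t| < ε` for all `t`. -/
def APSequence (g : ℤ → ℝ) : Prop :=
  ∀ ε : ℝ, 0 < ε → ∃ l : ℕ, 0 < l ∧ ∀ a : ℤ,
    ∃ τ ∈ Finset.Icc a (a + l), ∀ t : ℤ, |g (t + τ) - g t| < ε

/-- `φ : ℤ → ℝ` belongs to `PAP₀(ℤ)` if it is bounded and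
`(1/(2r)) ∑_{s=-r}^{r} |φ s| → 0` as `r → ∞`. -/
def PAPZeroSeq (φ : ℤ → ℝ) : Prop :=
  (∃ C : ℝ, ∀ t : ℤ, |φ t| ≤ C) ∧
    Filter.Tendsto
      (fun r : ℕ => (1 / (2 * (r : ℝ))) * ∑ s ∈ Finset.Icc (-(r : ℤ)) (r : ℤ), |φ s|)
      Filter.atTop (nhds 0)

/-- `f : ℤ → ℝ` is pseudo almost periodic if `f = g + φ` with `g` an almost periodic
sequence and `φ ∈ PAP₀(ℤ)`. -/
def PseudoAPSeq (f : ℤ → ℝ) : Prop :=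
  ∃ g φ : ℤ → ℝ, APSequence g ∧ PAPZeroSeq φ ∧ f = g + φ

/-- The right-hand side of the neutral high-order Hopfield difference system on `ℤ`. -/
noncomputable def HopfieldRHSZ (n : ℕ) (c : Fin n → ℤ → ℝ) (δ : Fin n → ℤ → ℕ) (I : Fin n → ℤ → ℝ)
    (a b d : Fin n → Fin n → ℤ → ℝ) (τ σ : Fin n → Fin n → ℤ → ℕ)
    (T : Fin n → Fin n → Fin n → ℤ → ℝ) (ξ ζ : Fin n → Fin n → Fin n → ℤ → ℕ)
    (f g h k : Fin n → ℝ → ℝ)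
    (x : Fin n → ℤ → ℝ) (i : Fin n) (t : ℤ) : ℝ :=
  -(c i t) * x i (t - δ i t)
    + (∑ j, a i j t * f j (x j t))
    + (∑ j, b i j t * g j (x j (t - τ i j t)))
    + (∑ j, d i j t * ∑ s ∈ Finset.Icc (t - σ i j t + 1) t, h j (x j s - x j (s - 1)))
    + (∑ j, ∑ l, T i j l t * k j (x j (t - ξ i j l t)) * k l (x l (t - ζ i j l t)))
    + I i t

/-- `x : ℤ → ℝⁿ` is a pseudo almost periodic solution of the discrete neutral high-order
Hopfield system: each `xᵢ` and each backward difference `∇xᵢ(t) = xᵢ(t) - xᵢ(t-1)` is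
pseudo almost periodic, both are bounded by `r`, and the difference system holds. -/
def IsPAPSolutionZ (n : ℕ) (c : Fin n → ℤ → ℝ) (δ : Fin n → ℤ → ℕ) (I : Fin n → ℤ → ℝ)
    (a b d : Fin n → Fin n → ℤ → ℝ) (τ σ : Fin n → Fin n → ℤ → ℕ)
    (T : Fin n → Fin n → Fin n → ℤ → ℝ) (ξ ζ : Fin n → Fin n → Fin n → ℤ → ℕ)
    (f g h k : Fin n → ℝ → ℝ) (r : ℝ)
    (x : Fin n → ℤ → ℝ) : Prop :=
  (∀ i, PseudoAPSeq (x i) ∧ PseudoAPSeq (fun t => x i t - x i (t - 1))) ∧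
  (∀ i t, |x i t| ≤ r ∧ |x i t - x i (t - 1)| ≤ r) ∧
  (∀ i t, x i t - x i (t - 1) = HopfieldRHSZ n c δ I a b d τ σ T ξ ζ f g h k x i t)

namespace S16

theorem commonAP {ι : Type*} [Fintype ι] (F : ι → ℤ → ℝ) (hF : ∀ i, APSequence (F i))
    {ε : ℝ} (hε : 0 < ε) : ∃ l : ℕ, 0 < l ∧ ∀ a : ℤ,
      ∃ τ ∈ Finset.Icc a (a + (l : ℤ)), ∀ i t, |F i (t + τ) - F i t| < ε := by
  classical
  by_contra hcon
  push_neg at hcon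
  -- hcon : ∀ l, 0 < l → ∃ a, ∀ τ ∈ Icc a (a+l), ∃ i t, ε ≤ |F i (t+τ) - F i t|
  set Bad : ℤ → Prop := fun τ => ∃ i t, ε ≤ |F i (t + τ) - F i t| with hBad
  have step : ∀ s : Finset ℤ, ∃ b : ℤ, ∀ x ∈ s, Bad (b - x) := by
    intro s
    set B : ℕ := s.sup (fun x => x.natAbs) with hB
    obtain ⟨a, ha⟩ := hcon (2 * B + 1) (by omega)
    refine ⟨a + B, ?_⟩
    intro x hx
    have hxB : (x.natAbs : ℤ) ≤ (B : ℤ) := by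
      exact_mod_cast Finset.le_sup (f := fun x => x.natAbs) hx
    have h1 : x ≤ (B : ℤ) := le_trans (Int.le_natAbs) hxB
    have h2 : -(B : ℤ) ≤ x := by
      have := Int.natAbs_le_iff_mul_self_le.mp (le_refl x.natAbs)
      have hx2 : -(x.natAbs : ℤ) ≤ x := by
        rcases Int.natAbs_eq x with h | h <;> omega
      omega
    apply ha
    simp only [Finset.mem_Icc]
    push_cast
    constructor <;> omega
  choose pick hpick using step
  have pick_not_mem : ∀ s : Finset ℤ, pick s ∉ s := by
    intro s hmem
    obtain ⟨i, t, h⟩ := hpick s _ hmem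
    simp only [sub_self, add_zero, sub_self, abs_zero] at h
    linarith
  obtain ⟨A, hA0, hAs⟩ : ∃ A : ℕ → Finset ℤ, A 0 = {0} ∧
      ∀ k, A (k + 1) = insert (pick (A k)) (A k) :=
    ⟨fun k => Nat.rec {0} (fun _ s => insert (pick s) s) k, rfl, fun _ => rfl⟩
  have hcard : ∀ k, (A k).card = k + 1 := by
    intro k
    induction k with
    | zero => simp [hA0]
    | succ k ih => rw [hAs, Finset.card_insert_of_notMem (pick_not_mem _), ih]
  have prop2 : ∀ k, ∀ x ∈ A k, ∀ y ∈ A k, x ≠ y → Bad (x - y) ∨ Bad (y - x) := by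
    intro k
    induction k with
    | zero =>
      intro x hx y hy hxy
      rw [hA0] at hx hy
      simp only [Finset.mem_singleton] at hx hy
      exact absurd (hx.trans hy.symm) hxy
    | succ k ih =>
      intro x hx y hy hxy
      rw [hAs] at hx hy
      rcases Finset.mem_insert.mp hx with rfl | hx'
      · rcases Finset.mem_insert.mp hy with rfl | hy'
        · exact absurd rfl hxy
        · exact Or.inl (hpick _ _ hy')
      · rcases Finset.mem_insert.mp hy with rfl | hy'
        · exact Or.inr (hpick _ _ hx')
        · exact ih x hx' y hy' hxy
  -- labels
  have hε8 : 0 < ε / 8 := by linarith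
  choose l hl0 hap using fun i => hF i (ε / 8) hε8
  have hlab : ∀ (τ : ℤ) (i : ι), ∃ j : ℤ, j ∈ Finset.Icc (0 : ℤ) (l i : ℤ) ∧
      ∀ t, |F i (t + τ) - F i (t + j)| < ε / 8 := by
    intro τ i
    obtain ⟨p, hp, hpt⟩ := hap i (-τ)
    refine ⟨τ + p, ?_, ?_⟩
    · simp only [Finset.mem_Icc] at hp ⊢
      omega
    · intro t
      have h := hpt (t + τ)
      have e : t + τ + p = t + (τ + p) := by ring
      rw [e] at h
      rw [abs_sub_comm]
      exact h
  choose J hJmem hJap using hlab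
  set target := Fintype.piFinset (fun i : ι => Finset.Icc (0 : ℤ) (l i : ℤ)) with htarget
  set N := target.card with hN
  have hmaps : ∀ τ ∈ A N, (fun i => J τ i) ∈ target := by
    intro τ _
    rw [htarget, Fintype.mem_piFinset]
    exact fun i => hJmem τ i
  obtain ⟨x, hx, y, hy, hxy, hJeq⟩ :=
    Finset.exists_ne_map_eq_of_card_lt_of_maps_to (by rw [hcard]; omega) hmaps
  have good : ∀ u v : ℤ, (∀ i, J u i = J v i) → ¬ Bad (u - v) := by
    intro u v hJ hbad
    obtain ⟨i, t, hb⟩ := hbad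
    have h1 := hJap u i (t - v)
    have h2 := hJap v i (t - v)
    rw [hJ i] at h1
    have e1 : t - v + u = t + (u - v) := by ring
    have e2 : t - v + v = t := by ring
    rw [e1] at h1
    rw [e2] at h2
    have : |F i (t + (u - v)) - F i t| < ε / 4 := by
      calc |F i (t + (u - v)) - F i t|
          ≤ |F i (t + (u - v)) - F i (t - v + J v i)| + |F i (t - v + J v i) - F i t| := by
            exact abs_sub_le _ _ _
        _ < ε / 8 + ε / 8 := by
            apply add_lt_add h1
            rw [abs_sub_comm]
            exact h2
        _ = ε / 4 := by ring
    linarith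
  have hJ' : ∀ i, J x i = J y i := fun i => congrFun hJeq i
  rcases prop2 N x hx y hy hxy with hb | hb
  · exact good x y hJ' hb
  · exact good y x (fun i => (hJ' i).symm) hb

end S16

namespace S16

lemma nat_eq_of_cast_lt_one {a b : ℕ} (h : |(a : ℝ) - (b : ℝ)| < 1) : a = b := by
  have h2 : |(a : ℤ) - (b : ℤ)| < (1 : ℤ) := by
    have h3 : |((a : ℤ) - (b : ℤ) : ℤ)| < ((1 : ℤ) : ℝ) → |(a : ℤ) - (b : ℤ)| < (1 : ℤ) := by
      intro hh
      exact_mod_cast (by push_cast at hh ⊢; exact hh : |((a:ℤ):ℝ) - ((b:ℤ):ℝ)| < 1)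
    apply h3
    push_cast
    exact h
  rcases abs_lt.mp h2 with ⟨hl, hr⟩
  omega

lemma ap_bounded {g : ℤ → ℝ} (hg : APSequence g) : ∃ C : ℝ, 0 ≤ C ∧ ∀ t, |g t| ≤ C := by
  obtain ⟨l, hl, hap⟩ := hg 1 one_pos
  have hne : (Finset.Icc (0 : ℤ) (l : ℤ)).Nonempty := ⟨0, by simp⟩
  set C0 := (Finset.Icc (0 : ℤ) (l : ℤ)).sup' hne (fun s => |g s|) with hC0
  refine ⟨C0 + 1, ?_, ?_⟩
  · have : |g 0| ≤ C0 := Finset.le_sup' (fun s => |g s|) (by simp)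
    have := abs_nonneg (g 0)
    linarith
  · intro t
    obtain ⟨τ, h1, h2⟩ := hap (-t)
    have hmem : t + τ ∈ Finset.Icc (0 : ℤ) (l : ℤ) := by
      simp only [Finset.mem_Icc] at h1 ⊢
      omega
    have hb : |g (t + τ)| ≤ C0 := Finset.le_sup' (fun s => |g s|) hmem
    have := h2 t
    have := abs_sub_abs_le_abs_sub (g (t + τ)) (g t)
    have h4 : |g t| - |g (t + τ)| ≤ |g (t + τ) - g t| := by
      have := abs_sub_abs_le_abs_sub (g t) (g (t + τ))
      rwa [abs_sub_comm] at this
    linarith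

lemma ap_transfer {ι : Type*} [Fintype ι] (F : ι → ℤ → ℝ) (hF : ∀ i, APSequence (F i))
    (G : ℤ → ℝ)
    (h : ∀ ε : ℝ, 0 < ε → ∃ ε' : ℝ, 0 < ε' ∧ ∀ τ : ℤ,
      (∀ i t, |F i (t + τ) - F i t| < ε') → ∀ t, |G (t + τ) - G t| < ε) :
    APSequence G := by
  intro ε hε
  obtain ⟨ε', hε', himp⟩ := h ε hε
  obtain ⟨l, hl, hap⟩ := commonAP F hF hε'
  refine ⟨l, hl, fun a => ?_⟩
  obtain ⟨τ, hτ, hτ2⟩ := hap a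
  exact ⟨τ, hτ, himp τ hτ2⟩

lemma ap_transfer2 (g h : ℤ → ℝ) (hg : APSequence g) (hh : APSequence h) (G : ℤ → ℝ)
    (hcond : ∀ ε : ℝ, 0 < ε → ∃ ε' : ℝ, 0 < ε' ∧ ∀ τ : ℤ,
      (∀ t, |g (t + τ) - g t| < ε') → (∀ t, |h (t + τ) - h t| < ε') →
      ∀ t, |G (t + τ) - G t| < ε) : APSequence G := by
  apply ap_transfer ![g, h] (fun i => by fin_cases i <;> simpa) G
  intro ε hε
  obtain ⟨ε', h1, h2⟩ := hcond ε hε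
  refine ⟨ε', h1, fun τ hτ => h2 τ (fun t => by simpa using hτ 0 t) (fun t => by simpa using hτ 1 t)⟩

lemma ap_const (C : ℝ) : APSequence (fun _ => C) := by
  intro ε hε
  exact ⟨1, one_pos, fun a => ⟨a, by simp, fun t => by simpa using hε⟩⟩

lemma ap_add {g h : ℤ → ℝ} (hg : APSequence g) (hh : APSequence h) :
    APSequence (fun t => g t + h t) := by
  apply ap_transfer2 g h hg hh
  intro ε hε
  refine ⟨ε / 2, by linarith, fun τ h1 h2 t => ?_⟩
  have e : g (t + τ) + h (t + τ) - (g t + h t) = (g (t + τ) - g t) + (h (t + τ) - h t) := by ring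
  calc |g (t + τ) + h (t + τ) - (g t + h t)| ≤ |g (t + τ) - g t| + |h (t + τ) - h t| := by
        rw [e]; exact abs_add_le _ _
    _ < ε / 2 + ε / 2 := add_lt_add (h1 t) (h2 t)
    _ = ε := by ring

lemma ap_neg {g : ℤ → ℝ} (hg : APSequence g) : APSequence (fun t => -(g t)) := by
  intro ε hε
  obtain ⟨l, hl, hap⟩ := hg ε hε
  refine ⟨l, hl, fun a => ?_⟩
  obtain ⟨τ, h1, h2⟩ := hap a
  refine ⟨τ, h1, fun t => ?_⟩
  have e : -(g (t + τ)) - -(g t) = -(g (t + τ) - g t) := by ring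
  rw [e, abs_neg]
  exact h2 t

lemma ap_sub {g h : ℤ → ℝ} (hg : APSequence g) (hh : APSequence h) :
    APSequence (fun t => g t - h t) := by
  have := ap_add hg (ap_neg hh)
  simpa [sub_eq_add_neg] using this

lemma ap_mul {g h : ℤ → ℝ} (hg : APSequence g) (hh : APSequence h) :
    APSequence (fun t => g t * h t) := by
  obtain ⟨Bg, hBg0, hBg⟩ := ap_bounded hg
  obtain ⟨Bh, hBh0, hBh⟩ := ap_bounded hh
  apply ap_transfer2 g h hg hh
  intro ε hε
  refine ⟨ε / (Bg + Bh + 1), by positivity, fun τ h1 h2 t => ?_⟩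
  have e : g (t + τ) * h (t + τ) - g t * h t
      = g (t + τ) * (h (t + τ) - h t) + h t * (g (t + τ) - g t) := by ring
  calc |g (t + τ) * h (t + τ) - g t * h t|
      ≤ |g (t + τ)| * |h (t + τ) - h t| + |h t| * |g (t + τ) - g t| := by
        rw [e]
        refine le_trans (abs_add_le _ _) ?_
        rw [abs_mul, abs_mul]
    _ ≤ Bg * (ε / (Bg + Bh + 1)) + Bh * (ε / (Bg + Bh + 1)) := by
        gcongr
        · exact hBg _
        · exact le_of_lt (h2 t)
        · exact hBh t
        · exact le_of_lt (h1 t)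
    _ = (Bg + Bh) * (ε / (Bg + Bh + 1)) := by ring
    _ < (Bg + Bh + 1) * (ε / (Bg + Bh + 1)) := by
        apply mul_lt_mul_of_pos_right (by linarith) (by positivity)
    _ = ε := by field_simp

lemma ap_finset_sum {κ : Type*} (s : Finset κ) (f : κ → ℤ → ℝ)
    (h : ∀ j ∈ s, APSequence (f j)) : APSequence (fun t => ∑ j ∈ s, f j t) := by
  classical
  induction s using Finset.induction_on with
  | empty => simpa using ap_const 0
  | @insert a s' hns ih =>
    have := ap_add (h a (Finset.mem_insert_self a s'))
      (ih (fun j hj => h j (Finset.mem_insert_of_mem hj)))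
    simpa [Finset.sum_insert hns] using this

lemma ap_lipcomp (F : ℝ → ℝ) (L : ℝ) (hL : 0 ≤ L)
    (hLip : ∀ x y : ℝ, |F x - F y| ≤ L * |x - y|) {g : ℤ → ℝ} (hg : APSequence g) :
    APSequence (fun t => F (g t)) := by
  intro ε hε
  obtain ⟨l, hl, hap⟩ := hg (ε / (L + 1)) (by positivity)
  refine ⟨l, hl, fun a => ?_⟩
  obtain ⟨τ, h1, h2⟩ := hap a
  refine ⟨τ, h1, fun t => ?_⟩
  calc |F (g (t + τ)) - F (g t)| ≤ L * |g (t + τ) - g t| := hLip _ _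
    _ ≤ L * (ε / (L + 1)) := mul_le_mul_of_nonneg_left (le_of_lt (h2 t)) hL
    _ < (L + 1) * (ε / (L + 1)) := mul_lt_mul_of_pos_right (by linarith) (by positivity)
    _ = ε := by field_simp

lemma ap_shift (m : ℤ) {g : ℤ → ℝ} (hg : APSequence g) :
    APSequence (fun t => g (t - m)) := by
  intro ε hε
  obtain ⟨l, hl, hap⟩ := hg ε hε
  refine ⟨l, hl, fun a => ?_⟩
  obtain ⟨τ, h1, h2⟩ := hap a
  refine ⟨τ, h1, fun t => ?_⟩
  have e : t + τ - m = t - m + τ := by ring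
  simpa [e] using h2 (t - m)

lemma ap_delay {g : ℤ → ℝ} (hg : APSequence g) (τd : ℤ → ℕ)
    (hτd : APSequence (fun t => (τd t : ℝ))) :
    APSequence (fun t => g (t - τd t)) := by
  apply ap_transfer2 g (fun t => (τd t : ℝ)) hg hτd
  intro ε hε
  refine ⟨min ε 1, lt_min hε one_pos, fun τ h1 h2 t => ?_⟩
  have heq : τd (t + τ) = τd t :=
    nat_eq_of_cast_lt_one (lt_of_lt_of_le (h2 t) (min_le_right _ _))
  show |g (t + τ - τd (t + τ)) - g (t - τd t)| < ε
  rw [heq]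
  have e : t + τ - (τd t : ℤ) = (t - τd t) + τ := by ring
  rw [e]
  exact lt_of_lt_of_le (h1 _) (min_le_left _ _)

lemma ap_window {g : ℤ → ℝ} (hg : APSequence g) (σd : ℤ → ℕ)
    (hσd : APSequence (fun t => (σd t : ℝ))) (σp : ℕ) (hσp : ∀ t, σd t ≤ σp) :
    APSequence (fun t => ∑ s ∈ Finset.Icc (t - σd t + 1) t, g s) := by
  apply ap_transfer2 g (fun t => (σd t : ℝ)) hg hσd
  intro ε hε
  refine ⟨min (ε / (σp + 1)) 1, lt_min (by positivity) one_pos, fun τ h1 h2 t => ?_⟩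
  have heq : σd (t + τ) = σd t :=
    nat_eq_of_cast_lt_one (lt_of_lt_of_le (h2 t) (min_le_right _ _))
  show |∑ s ∈ Finset.Icc (t + τ - σd (t + τ) + 1) (t + τ), g s
      - ∑ s ∈ Finset.Icc (t - σd t + 1) t, g s| < ε
  rw [heq]
  have hre : ∑ s ∈ Finset.Icc (t + τ - σd t + 1) (t + τ), g s
      = ∑ s ∈ Finset.Icc (t - σd t + 1) t, g (s + τ) := by
    have e1 : t + τ - (σd t : ℤ) + 1 = (t - σd t + 1) + τ := by ring
    rw [e1, ← Finset.map_add_right_Icc, Finset.sum_map]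
    rfl
  rw [hre, ← Finset.sum_sub_distrib]
  set m := min (ε / ((σp : ℝ) + 1)) 1 with hm
  have hcard : (Finset.Icc (t - σd t + 1) t).card = σd t := by
    rw [Int.card_Icc]
    simp
  calc |∑ s ∈ Finset.Icc (t - σd t + 1) t, (g (s + τ) - g s)|
      ≤ ∑ s ∈ Finset.Icc (t - σd t + 1) t, |g (s + τ) - g s| :=
        Finset.abs_sum_le_sum_abs _ _
    _ ≤ (Finset.Icc (t - σd t + 1) t).card • m := by
        apply Finset.sum_le_card_nsmul
        intro s _
        exact le_of_lt (h1 s)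
    _ = ((σd t : ℕ) : ℝ) * m := by rw [hcard, nsmul_eq_mul]
    _ ≤ (σp : ℝ) * m := by
        apply mul_le_mul_of_nonneg_right _ (le_min (by positivity) (by norm_num))
        exact_mod_cast hσp t
    _ ≤ (σp : ℝ) * (ε / (σp + 1)) := by
        apply mul_le_mul_of_nonneg_left (min_le_left _ _) (by positivity)
    _ < ((σp : ℝ) + 1) * (ε / (σp + 1)) := by
        apply mul_lt_mul_of_pos_right (by linarith) (by positivity)
    _ = ε := by field_simp

lemma ap_unif_limit (G : ℤ → ℝ)
    (h : ∀ η : ℝ, 0 < η → ∃ g : ℤ → ℝ, APSequence g ∧ ∀ t, |G t - g t| ≤ η) :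
    APSequence G := by
  intro ε hε
  obtain ⟨g, hg, hcl⟩ := h (ε / 4) (by linarith)
  obtain ⟨l, hl, hap⟩ := hg (ε / 4) (by linarith)
  refine ⟨l, hl, fun a => ?_⟩
  obtain ⟨τ, h1, h2⟩ := hap a
  refine ⟨τ, h1, fun t => ?_⟩
  calc |G (t + τ) - G t|
      ≤ |G (t + τ) - g (t + τ)| + |g (t + τ) - g t| + |g t - G t| := by
        have := abs_sub_le (G (t + τ)) (g (t + τ)) (G t)
        have h3 := abs_sub_le (g (t + τ)) (g t) (G t)
        linarith
    _ ≤ ε / 4 + ε / 4 + ε / 4 := by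
        have := hcl (t + τ)
        have h4 := hcl t
        rw [abs_sub_comm (g t) (G t)]
        have := h2 t
        linarith
    _ < ε := by linarith

end S16

namespace S16

lemma mean_nonneg (φ : ℤ → ℝ) (r : ℕ) :
    0 ≤ (1 / (2 * (r : ℝ))) * ∑ s ∈ Finset.Icc (-(r : ℤ)) (r : ℤ), |φ s| := by
  apply mul_nonneg
  · apply one_div_nonneg.mpr
    positivity
  · exact Finset.sum_nonneg fun s _ => abs_nonneg _

lemma papzero_zero : PAPZeroSeq (fun _ => 0) := by
  constructor
  · exact ⟨0, fun t => by simp⟩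
  · have : (fun r : ℕ => (1 / (2 * (r : ℝ))) * ∑ s ∈ Finset.Icc (-(r : ℤ)) (r : ℤ),
        |(0 : ℝ)|) = fun _ => 0 := by
      funext r; simp
    rw [this]
    exact tendsto_const_nhds

lemma papzero_mono {χ ψ : ℤ → ℝ} (hχ : PAPZeroSeq χ) (h : ∀ t, |ψ t| ≤ |χ t|) :
    PAPZeroSeq ψ := by
  obtain ⟨⟨C, hC⟩, htd⟩ := hχ
  constructor
  · exact ⟨C, fun t => le_trans (h t) (hC t)⟩
  · apply squeeze_zero (fun r => mean_nonneg ψ r) _ htd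
    intro r
    apply mul_le_mul_of_nonneg_left _ (one_div_nonneg.mpr (by positivity))
    exact Finset.sum_le_sum fun s _ => h s

lemma papzero_abs {φ : ℤ → ℝ} (hφ : PAPZeroSeq φ) : PAPZeroSeq (fun t => |φ t|) :=
  papzero_mono hφ (fun t => by simp)

lemma papzero_add {φ ψ : ℤ → ℝ} (hφ : PAPZeroSeq φ) (hψ : PAPZeroSeq ψ) :
    PAPZeroSeq (fun t => φ t + ψ t) := by
  obtain ⟨⟨C1, hC1⟩, h1⟩ := hφ
  obtain ⟨⟨C2, hC2⟩, h2⟩ := hψ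
  constructor
  · exact ⟨C1 + C2, fun t => le_trans (abs_add_le _ _) (add_le_add (hC1 t) (hC2 t))⟩
  · apply squeeze_zero (fun r => mean_nonneg _ r) _ (by simpa using h1.add h2)
    intro r
    have : ∑ s ∈ Finset.Icc (-(r : ℤ)) (r : ℤ), |φ s + ψ s|
        ≤ ∑ s ∈ Finset.Icc (-(r : ℤ)) (r : ℤ), |φ s|
          + ∑ s ∈ Finset.Icc (-(r : ℤ)) (r : ℤ), |ψ s| := by
      rw [← Finset.sum_add_distrib]
      exact Finset.sum_le_sum fun s _ => abs_add_le _ _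
    calc (1 / (2 * (r : ℝ))) * ∑ s ∈ Finset.Icc (-(r : ℤ)) (r : ℤ), |φ s + ψ s|
        ≤ (1 / (2 * (r : ℝ))) * (∑ s ∈ Finset.Icc (-(r : ℤ)) (r : ℤ), |φ s|
          + ∑ s ∈ Finset.Icc (-(r : ℤ)) (r : ℤ), |ψ s|) :=
          mul_le_mul_of_nonneg_left this (one_div_nonneg.mpr (by positivity))
      _ = _ := by ring

lemma papzero_const_mul (C : ℝ) {φ : ℤ → ℝ} (hφ : PAPZeroSeq φ) :
    PAPZeroSeq (fun t => C * φ t) := by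
  obtain ⟨⟨C1, hC1⟩, h1⟩ := hφ
  constructor
  · exact ⟨|C| * C1, fun t => by
      rw [abs_mul]
      exact mul_le_mul_of_nonneg_left (hC1 t) (abs_nonneg _)⟩
  · have he : (fun r : ℕ => (1 / (2 * (r : ℝ))) * ∑ s ∈ Finset.Icc (-(r : ℤ)) (r : ℤ),
        |C * φ s|) = fun r : ℕ => |C| * ((1 / (2 * (r : ℝ)))
          * ∑ s ∈ Finset.Icc (-(r : ℤ)) (r : ℤ), |φ s|) := by
      funext r
      simp only [abs_mul, ← Finset.mul_sum]
      ring
    rw [he]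
    simpa using h1.const_mul |C|

lemma papzero_finset_sum {κ : Type*} (s : Finset κ) (f : κ → ℤ → ℝ)
    (h : ∀ j ∈ s, PAPZeroSeq (f j)) : PAPZeroSeq (fun t => ∑ j ∈ s, f j t) := by
  classical
  induction s using Finset.induction_on with
  | empty => simpa using papzero_zero
  | @insert a s' hns ih =>
    have := papzero_add (h a (Finset.mem_insert_self a s'))
      (ih (fun j hj => h j (Finset.mem_insert_of_mem hj)))
    simpa [Finset.sum_insert hns] using this

lemma papzero_shift (m : ℤ) {φ : ℤ → ℝ} (hφ : PAPZeroSeq φ) :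
    PAPZeroSeq (fun t => φ (t - m)) := by
  obtain ⟨⟨C, hC⟩, h1⟩ := hφ
  refine ⟨⟨C, fun t => hC _⟩, ?_⟩
  set K : ℕ := m.natAbs with hK
  set S : ℕ → ℝ := fun u => ∑ s ∈ Finset.Icc (-(u : ℤ)) (u : ℤ), |φ s| with hS
  have hS0 : ∀ u, 0 ≤ S u := fun u => Finset.sum_nonneg fun s _ => abs_nonneg _
  have key : ∀ r : ℕ, 1 ≤ r →
      (1 / (2 * (r : ℝ))) * ∑ s ∈ Finset.Icc (-(r : ℤ)) (r : ℤ), |φ (s - m)|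
        ≤ (1 + (K : ℝ)) * ((1 / (2 * ((r + K : ℕ) : ℝ))) * S (r + K)) := by
    intro r hr
    have hsum : ∑ s ∈ Finset.Icc (-(r : ℤ)) (r : ℤ), |φ (s - m)|
        = ∑ u ∈ Finset.Icc (-(r : ℤ) + -m) ((r : ℤ) + -m), |φ u| := by
      rw [← Finset.map_add_right_Icc]
      rw [Finset.sum_map]
      simp [addRightEmbedding, sub_eq_add_neg]
    have hsub : ∑ u ∈ Finset.Icc (-(r : ℤ) + -m) ((r : ℤ) + -m), |φ u| ≤ S (r + K) := by
      apply Finset.sum_le_sum_of_subset_of_nonneg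
      · intro u hu
        simp only [Finset.mem_Icc] at hu ⊢
        push_cast at hu ⊢
        omega
      · intro u _ _
        exact abs_nonneg _
    rw [hsum]
    have hrpos : (0 : ℝ) < 2 * r := by
      have : (1 : ℝ) ≤ r := by exact_mod_cast hr
      linarith
    have hrKpos : (0 : ℝ) < 2 * ((r + K : ℕ) : ℝ) := by
      push_cast
      have : (1 : ℝ) ≤ r := by exact_mod_cast hr
      positivity
    calc (1 / (2 * (r : ℝ))) * ∑ u ∈ Finset.Icc (-(r : ℤ) + -m) ((r : ℤ) + -m), |φ u|
        ≤ (1 / (2 * (r : ℝ))) * S (r + K) :=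
          mul_le_mul_of_nonneg_left hsub (one_div_nonneg.mpr (le_of_lt hrpos))
      _ ≤ ((1 + (K : ℝ)) / (2 * ((r + K : ℕ) : ℝ))) * S (r + K) := by
          apply mul_le_mul_of_nonneg_right _ (hS0 _)
          rw [div_le_div_iff₀ hrpos hrKpos]
          push_cast
          have h1r : (1 : ℝ) ≤ r := by exact_mod_cast hr
          have hK0 : (0 : ℝ) ≤ K := by positivity
          nlinarith
      _ = (1 + (K : ℝ)) * ((1 / (2 * ((r + K : ℕ) : ℝ))) * S (r + K)) := by ring
  apply squeeze_zero' (Filter.Eventually.of_forall (fun r => mean_nonneg _ r))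
  · exact Filter.eventually_atTop.mpr ⟨1, fun r hr => key r hr⟩
  · have hcomp : Filter.Tendsto (fun r : ℕ => (1 / (2 * ((r + K : ℕ) : ℝ))) * S (r + K))
        Filter.atTop (nhds 0) := h1.comp (Filter.tendsto_add_atTop_nat K)
    simpa using hcomp.const_mul (1 + (K : ℝ))

lemma papzero_unif_limit (φ : ℤ → ℝ) (hb : ∃ C : ℝ, ∀ t, |φ t| ≤ C)
    (h : ∀ η : ℝ, 0 < η → ∃ ψ : ℤ → ℝ, PAPZeroSeq ψ ∧ ∀ t, |φ t - ψ t| ≤ η) :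
    PAPZeroSeq φ := by
  refine ⟨hb, ?_⟩
  rw [Metric.tendsto_atTop]
  intro ε hε
  obtain ⟨ψ, hψ, hcl⟩ := h (ε / 8) (by linarith)
  obtain ⟨N, hN⟩ := Metric.tendsto_atTop.mp hψ.2 (ε / 2) (by linarith)
  refine ⟨max N 1, fun r hr => ?_⟩
  have hr1 : 1 ≤ r := le_trans (le_max_right N 1) hr
  have hrN : N ≤ r := le_trans (le_max_left N 1) hr
  have hrpos : (0 : ℝ) < 2 * r := by
    have : (1 : ℝ) ≤ r := by exact_mod_cast hr1
    linarith
  have hcard : ((Finset.Icc (-(r : ℤ)) (r : ℤ)).card : ℝ) = 2 * r + 1 := by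
    have h1 : (Finset.Icc (-(r : ℤ)) (r : ℤ)).card = ((r : ℤ) + 1 - -(r : ℤ)).toNat :=
      Int.card_Icc _ _
    have h3 : ((Finset.Icc (-(r : ℤ)) (r : ℤ)).card : ℤ) = 2 * (r : ℤ) + 1 := by
      rw [h1]
      have h2 : ((r : ℤ) + 1 - -(r : ℤ)) = 2 * (r : ℤ) + 1 := by ring
      rw [h2, Int.toNat_of_nonneg (by positivity)]
    exact_mod_cast h3
  have hsum : ∑ s ∈ Finset.Icc (-(r : ℤ)) (r : ℤ), |φ s|
      ≤ (∑ s ∈ Finset.Icc (-(r : ℤ)) (r : ℤ), |ψ s|) + (2 * r + 1) * (ε / 8) := by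
    have : ∀ s, |φ s| ≤ |ψ s| + ε / 8 := by
      intro s
      have h1 := hcl s
      have h2 := abs_sub_abs_le_abs_sub (φ s) (ψ s)
      linarith
    calc ∑ s ∈ Finset.Icc (-(r : ℤ)) (r : ℤ), |φ s|
        ≤ ∑ s ∈ Finset.Icc (-(r : ℤ)) (r : ℤ), (|ψ s| + ε / 8) :=
          Finset.sum_le_sum fun s _ => this s
      _ = (∑ s ∈ Finset.Icc (-(r : ℤ)) (r : ℤ), |ψ s|)
          + ((Finset.Icc (-(r : ℤ)) (r : ℤ)).card : ℝ) * (ε / 8) := by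
          rw [Finset.sum_add_distrib, Finset.sum_const, nsmul_eq_mul]
      _ = _ := by rw [hcard]
  have hmean : (1 / (2 * (r : ℝ))) * ∑ s ∈ Finset.Icc (-(r : ℤ)) (r : ℤ), |φ s|
      ≤ (1 / (2 * (r : ℝ))) * ∑ s ∈ Finset.Icc (-(r : ℤ)) (r : ℤ), |ψ s|
        + (2 * r + 1) / (2 * r) * (ε / 8) := by
    calc (1 / (2 * (r : ℝ))) * ∑ s ∈ Finset.Icc (-(r : ℤ)) (r : ℤ), |φ s|
        ≤ (1 / (2 * (r : ℝ))) * ((∑ s ∈ Finset.Icc (-(r : ℤ)) (r : ℤ), |ψ s|)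
          + (2 * r + 1) * (ε / 8)) :=
          mul_le_mul_of_nonneg_left hsum (one_div_nonneg.mpr (le_of_lt hrpos))
      _ = _ := by field_simp
  have hfrac : (2 * (r : ℝ) + 1) / (2 * r) ≤ 2 := by
    rw [div_le_iff₀ hrpos]
    have : (1 : ℝ) ≤ r := by exact_mod_cast hr1
    linarith
  have hψr := hN r hrN
  rw [Real.dist_eq, sub_zero] at hψr ⊢
  rw [abs_of_nonneg (mean_nonneg _ _)]
  have hψabs : (1 / (2 * (r : ℝ))) * ∑ s ∈ Finset.Icc (-(r : ℤ)) (r : ℤ), |ψ s| < ε / 2 := by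
    have := abs_of_nonneg (mean_nonneg ψ r)
    rw [this] at hψr
    exact hψr
  have : (2 * (r : ℝ) + 1) / (2 * r) * (ε / 8) ≤ 2 * (ε / 8) :=
    mul_le_mul_of_nonneg_right hfrac (by linarith)
  calc (1 / (2 * (r : ℝ))) * ∑ s ∈ Finset.Icc (-(r : ℤ)) (r : ℤ), |φ s|
      ≤ (1 / (2 * (r : ℝ))) * ∑ s ∈ Finset.Icc (-(r : ℤ)) (r : ℤ), |ψ s|
        + (2 * r + 1) / (2 * r) * (ε / 8) := hmean
    _ < ε / 2 + 2 * (ε / 8) := by linarith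
    _ < ε := by linarith

end S16

namespace S16

lemma pap_of_ap {g : ℤ → ℝ} (hg : APSequence g) : PseudoAPSeq g :=
  ⟨g, fun _ => 0, hg, papzero_zero, by funext t; simp⟩

lemma pap_decomp {f : ℤ → ℝ} (hf : PseudoAPSeq f) :
    ∃ g φ : ℤ → ℝ, APSequence g ∧ PAPZeroSeq φ ∧ ∀ t, f t = g t + φ t := by
  obtain ⟨g, φ, h1, h2, h3⟩ := hf
  exact ⟨g, φ, h1, h2, fun t => congrFun h3 t⟩

lemma pap_mk {f g φ : ℤ → ℝ} (hg : APSequence g) (hφ : PAPZeroSeq φ)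
    (h : ∀ t, f t = g t + φ t) : PseudoAPSeq f :=
  ⟨g, φ, hg, hφ, funext h⟩

lemma pap_add {f1 f2 : ℤ → ℝ} (h1 : PseudoAPSeq f1) (h2 : PseudoAPSeq f2) :
    PseudoAPSeq (fun t => f1 t + f2 t) := by
  obtain ⟨g1, φ1, hg1, hφ1, he1⟩ := pap_decomp h1
  obtain ⟨g2, φ2, hg2, hφ2, he2⟩ := pap_decomp h2
  exact pap_mk (ap_add hg1 hg2) (papzero_add hφ1 hφ2)
    (fun t => by rw [he1 t, he2 t]; ring)

lemma pap_neg {f : ℤ → ℝ} (h : PseudoAPSeq f) : PseudoAPSeq (fun t => -(f t)) := by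
  obtain ⟨g, φ, hg, hφ, he⟩ := pap_decomp h
  refine pap_mk (g := fun t => -(g t)) (φ := fun t => -(φ t)) (ap_neg hg)
    (papzero_mono (χ := fun t => -1 * φ t) (papzero_const_mul (-1) hφ)
      (fun t => by simp)) ?_
  intro t; rw [he t]; ring

lemma pap_sub {f1 f2 : ℤ → ℝ} (h1 : PseudoAPSeq f1) (h2 : PseudoAPSeq f2) :
    PseudoAPSeq (fun t => f1 t - f2 t) := by
  have := pap_add h1 (pap_neg h2)
  simpa [sub_eq_add_neg] using this

lemma papzero_bound_nonneg {φ : ℤ → ℝ} (hφ : PAPZeroSeq φ) :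
    ∃ C : ℝ, 0 ≤ C ∧ ∀ t, |φ t| ≤ C := by
  obtain ⟨C, hC⟩ := hφ.1
  exact ⟨C, le_trans (abs_nonneg _) (hC 0), hC⟩

lemma pap_mul {f1 f2 : ℤ → ℝ} (h1 : PseudoAPSeq f1) (h2 : PseudoAPSeq f2) :
    PseudoAPSeq (fun t => f1 t * f2 t) := by
  obtain ⟨g1, φ1, hg1, hφ1, he1⟩ := pap_decomp h1
  obtain ⟨g2, φ2, hg2, hφ2, he2⟩ := pap_decomp h2
  obtain ⟨B1, hB10, hB1⟩ := ap_bounded hg1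
  obtain ⟨B2, hB20, hB2⟩ := ap_bounded hg2
  obtain ⟨C2, hC20, hC2⟩ := papzero_bound_nonneg hφ2
  refine pap_mk (g := fun t => g1 t * g2 t)
    (φ := fun t => g1 t * φ2 t + (φ1 t * g2 t + φ1 t * φ2 t))
    (ap_mul hg1 hg2) ?_ ?_
  · apply papzero_add
    · apply papzero_mono (papzero_const_mul B1 hφ2)
      intro t
      rw [abs_mul, abs_mul, abs_of_nonneg hB10]
      exact mul_le_mul_of_nonneg_right (hB1 t) (abs_nonneg _)
    · apply papzero_add
      · apply papzero_mono (papzero_const_mul B2 hφ1)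
        intro t
        rw [abs_mul, abs_mul, abs_of_nonneg hB20, mul_comm (|φ1 t|)]
        exact mul_le_mul_of_nonneg_right (hB2 t) (abs_nonneg _)
      · apply papzero_mono (papzero_const_mul C2 hφ1)
        intro t
        rw [abs_mul, abs_mul, abs_of_nonneg hC20, mul_comm (|φ1 t|)]
        exact mul_le_mul_of_nonneg_right (hC2 t) (abs_nonneg _)
  · intro t
    rw [he1 t, he2 t]
    ring

lemma pap_lipcomp (F : ℝ → ℝ) (L : ℝ) (hL : 0 ≤ L)
    (hLip : ∀ x y : ℝ, |F x - F y| ≤ L * |x - y|) {x : ℤ → ℝ} (hx : PseudoAPSeq x) :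
    PseudoAPSeq (fun t => F (x t)) := by
  obtain ⟨g, φ, hg, hφ, he⟩ := pap_decomp hx
  refine pap_mk (g := fun t => F (g t)) (φ := fun t => F (x t) - F (g t))
    (ap_lipcomp F L hL hLip hg) ?_ (fun t => by ring)
  apply papzero_mono (papzero_const_mul L hφ)
  intro t
  have h1 : |F (x t) - F (g t)| ≤ L * |x t - g t| := hLip _ _
  have h2 : x t - g t = φ t := by rw [he t]; ring
  rw [h2] at h1
  calc |F (x t) - F (g t)| ≤ L * |φ t| := h1
    _ = |L * φ t| := by rw [abs_mul, abs_of_nonneg hL]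

lemma pap_shift (m : ℤ) {x : ℤ → ℝ} (hx : PseudoAPSeq x) :
    PseudoAPSeq (fun t => x (t - m)) := by
  obtain ⟨g, φ, hg, hφ, he⟩ := pap_decomp hx
  exact pap_mk (ap_shift m hg) (papzero_shift m hφ) (fun t => he (t - m))

lemma pap_finset_sum {κ : Type*} (s : Finset κ) (f : κ → ℤ → ℝ)
    (h : ∀ j ∈ s, PseudoAPSeq (f j)) : PseudoAPSeq (fun t => ∑ j ∈ s, f j t) := by
  classical
  induction s using Finset.induction_on with
  | empty => simpa using pap_of_ap (ap_const 0)
  | @insert a s' hns ih =>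
    have := pap_add (h a (Finset.mem_insert_self a s'))
      (ih (fun j hj => h j (Finset.mem_insert_of_mem hj)))
    simpa [Finset.sum_insert hns] using this

lemma pap_delay {x : ℤ → ℝ} (hx : PseudoAPSeq x) (τd : ℤ → ℕ)
    (hτd : APSequence (fun t => (τd t : ℝ))) (τp : ℕ) (hτp : ∀ t, τd t ≤ τp) :
    PseudoAPSeq (fun t => x (t - τd t)) := by
  obtain ⟨g, φ, hg, hφ, he⟩ := pap_decomp hx
  refine pap_mk (g := fun t => g (t - τd t)) (φ := fun t => φ (t - τd t))
    (ap_delay hg τd hτd) ?_ (fun t => he _)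
  set χ : ℤ → ℝ := fun t => ∑ m ∈ Finset.range (τp + 1), |φ (t - (m : ℤ))| with hχdef
  have hχ : PAPZeroSeq χ := by
    apply papzero_finset_sum
    intro m _
    exact papzero_shift (m : ℤ) (papzero_abs hφ)
  apply papzero_mono hχ
  intro t
  have hχ0 : 0 ≤ χ t := Finset.sum_nonneg fun m _ => abs_nonneg _
  rw [abs_of_nonneg hχ0]
  have hmem : τd t ∈ Finset.range (τp + 1) := by
    simp only [Finset.mem_range]
    exact Nat.lt_succ_of_le (hτp t)
  exact Finset.single_le_sum (f := fun m : ℕ => |φ (t - (m : ℤ))|)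
    (fun m _ => abs_nonneg _) hmem

lemma pap_window {x : ℤ → ℝ} (hx : PseudoAPSeq x) (σd : ℤ → ℕ)
    (hσd : APSequence (fun t => (σd t : ℝ))) (σp : ℕ) (hσp : ∀ t, σd t ≤ σp) :
    PseudoAPSeq (fun t => ∑ s ∈ Finset.Icc (t - σd t + 1) t, x s) := by
  classical
  obtain ⟨g, φ, hg, hφ, he⟩ := pap_decomp hx
  refine pap_mk (g := fun t => ∑ s ∈ Finset.Icc (t - σd t + 1) t, g s)
    (φ := fun t => ∑ s ∈ Finset.Icc (t - σd t + 1) t, φ s)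
    (ap_window hg σd hσd σp hσp) ?_ ?_
  · set χ : ℤ → ℝ := fun t => ∑ m ∈ Finset.range σp, |φ (t - (m : ℤ))| with hχdef
    have hχ : PAPZeroSeq χ := by
      apply papzero_finset_sum
      intro m _
      exact papzero_shift (m : ℤ) (papzero_abs hφ)
    apply papzero_mono hχ
    intro t
    have hχ0 : 0 ≤ χ t := Finset.sum_nonneg fun m _ => abs_nonneg _
    rw [abs_of_nonneg hχ0]
    have himg : Finset.Icc (t - σd t + 1) t
        ⊆ Finset.image (fun m : ℕ => t - (m : ℤ)) (Finset.range σp) := by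
      intro s hs
      simp only [Finset.mem_Icc] at hs
      simp only [Finset.mem_image, Finset.mem_range]
      refine ⟨(t - s).toNat, ?_, ?_⟩
      · have := hσp t
        omega
      · omega
    calc |∑ s ∈ Finset.Icc (t - σd t + 1) t, φ s|
        ≤ ∑ s ∈ Finset.Icc (t - σd t + 1) t, |φ s| := Finset.abs_sum_le_sum_abs _ _
      _ ≤ ∑ s ∈ Finset.image (fun m : ℕ => t - (m : ℤ)) (Finset.range σp), |φ s| :=
          Finset.sum_le_sum_of_subset_of_nonneg himg (fun s _ _ => abs_nonneg _)
      _ = χ t := by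
          rw [Finset.sum_image]
          intro m _ m' _ hmm
          simp only at hmm
          omega
  · intro t
    rw [← Finset.sum_add_distrib]
    exact Finset.sum_congr rfl fun s _ => he s

lemma ap_norm_le {g φ : ℤ → ℝ} (hg : APSequence g) (hφ : PAPZeroSeq φ) {C : ℝ}
    (hC : ∀ t, |g t + φ t| ≤ C) : ∀ t, |g t| ≤ C := by
  intro t0
  by_contra hcon
  push_neg at hcon
  set ε := (|g t0| - C) / 2 with hεdef
  have hεpos : 0 < ε := by
    rw [hεdef]
    linarith
  obtain ⟨l, hl, hap⟩ := hg ε hεpos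
  have key : ∀ a : ℤ, ∃ p : ℤ, a ≤ p ∧ p ≤ a + l ∧ ε ≤ |φ p| := by
    intro a
    obtain ⟨τ, hτmem, hτ⟩ := hap (a - t0)
    simp only [Finset.mem_Icc] at hτmem
    refine ⟨t0 + τ, by omega, by omega, ?_⟩
    have h1 := hτ t0
    have h2 := hC (t0 + τ)
    have h3 : |g t0| - |g (t0 + τ)| ≤ |g (t0 + τ) - g t0| := by
      have := abs_sub_abs_le_abs_sub (g t0) (g (t0 + τ))
      rwa [abs_sub_comm] at this
    have h4 : |g (t0 + τ)| - |g (t0 + τ) + φ (t0 + τ)| ≤ |φ (t0 + τ)| := by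
      have := abs_sub_abs_le_abs_sub (g (t0 + τ)) (g (t0 + τ) + φ (t0 + τ))
      have he : g (t0 + τ) - (g (t0 + τ) + φ (t0 + τ)) = -(φ (t0 + τ)) := by ring
      rw [he, abs_neg] at this
      linarith
    have : |g t0| = C + 2 * ε := by rw [hεdef]; ring
    linarith
  choose P hP1 hP2 hP3 using key
  set L : ℕ := l + 1 with hLdef
  have hLpos : 0 < L := by omega
  -- contradiction with the mean tending to zero
  have htd := hφ.2
  rw [Metric.tendsto_atTop] at htd
  obtain ⟨N, hN⟩ := htd (ε / (4 * L)) (by positivity)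
  set r : ℕ := max N (max L 1) with hrdef
  have hrN : N ≤ r := le_max_left _ _
  have hrL : L ≤ r := le_trans (le_max_left _ _) (le_max_right _ _)
  have hr1 : 1 ≤ r := le_trans (le_max_right _ _) (le_max_right _ _)
  set K : ℕ := (2 * r + 1) / L with hKdef
  have hdm : L * K + (2 * r + 1) % L = 2 * r + 1 := Nat.div_add_mod _ _
  have hmod : (2 * r + 1) % L < L := Nat.mod_lt _ hLpos
  have hKL : L * K ≤ 2 * r + 1 := by omega
  have hKLr : r ≤ L * K := by
    -- L * K ≥ 2r+2-L ≥ r+2 ≥ r  using r ≥ L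
    omega
  set pk : ℕ → ℤ := fun k => P (-(r : ℤ) + (k : ℤ) * (L : ℤ)) with hpkdef
  have hpklb : ∀ k : ℕ, -(r : ℤ) + (k : ℤ) * L ≤ pk k := fun k => hP1 _
  have hpkub : ∀ k : ℕ, pk k ≤ -(r : ℤ) + (k : ℤ) * L + l := fun k => hP2 _
  have hpkε : ∀ k : ℕ, ε ≤ |φ (pk k)| := fun k => hP3 _
  have hmono : ∀ k k' : ℕ, k < k' → pk k < pk k' := by
    intro k k' hkk
    have h1 := hpkub k
    have h2 := hpklb k'
    have : (k : ℤ) * L + l < (k' : ℤ) * L := by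
      have hk1 : (k : ℤ) + 1 ≤ k' := by exact_mod_cast hkk
      have : ((k : ℤ) + 1) * L ≤ (k' : ℤ) * L := by
        apply mul_le_mul_of_nonneg_right hk1
        positivity
      have hLl : (L : ℤ) = l + 1 := by rw [hLdef]; push_cast; ring
      nlinarith
    omega
  have hmem : ∀ k : ℕ, k < K → pk k ∈ Finset.Icc (-(r : ℤ)) (r : ℤ) := by
    intro k hk
    simp only [Finset.mem_Icc]
    constructor
    · have := hpklb k
      have : (0 : ℤ) ≤ (k : ℤ) * L := by positivity
      omega
    · have h1 := hpkub k
      have hk1 : (k : ℤ) + 1 ≤ K := by exact_mod_cast hk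
      have h2 : ((k : ℤ) + 1) * L ≤ (K : ℤ) * L := by
        apply mul_le_mul_of_nonneg_right hk1
        positivity
      have h3 : (L : ℤ) * K ≤ 2 * r + 1 := by exact_mod_cast hKL
      have hLl : (L : ℤ) = l + 1 := by rw [hLdef]; push_cast; ring
      nlinarith
  have hsum : (K : ℝ) * ε ≤ ∑ s ∈ Finset.Icc (-(r : ℤ)) (r : ℤ), |φ s| := by
    have hinj : ∀ x ∈ Finset.range K, ∀ y ∈ Finset.range K, pk x = pk y → x = y := by
      intro x _ y _ heq
      rcases lt_trichotomy x y with h | h | h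
      · exact absurd heq (ne_of_lt (hmono x y h))
      · exact h
      · exact absurd heq.symm (ne_of_lt (hmono y x h))
    have h1 : ∑ s ∈ (Finset.range K).image pk, |φ s|
        = ∑ k ∈ Finset.range K, |φ (pk k)| := Finset.sum_image hinj
    have h2 : (Finset.range K).image pk ⊆ Finset.Icc (-(r : ℤ)) (r : ℤ) := by
      intro s hs
      obtain ⟨k, hk, rfl⟩ := Finset.mem_image.mp hs
      exact hmem k (Finset.mem_range.mp hk)
    calc (K : ℝ) * ε = ∑ _k ∈ Finset.range K, ε := by
          rw [Finset.sum_const, nsmul_eq_mul, Finset.card_range]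
      _ ≤ ∑ k ∈ Finset.range K, |φ (pk k)| := Finset.sum_le_sum fun k _ => hpkε k
      _ = ∑ s ∈ (Finset.range K).image pk, |φ s| := h1.symm
      _ ≤ ∑ s ∈ Finset.Icc (-(r : ℤ)) (r : ℤ), |φ s| :=
          Finset.sum_le_sum_of_subset_of_nonneg h2 (fun s _ _ => abs_nonneg _)
  have hrpos : (0 : ℝ) < r := by
    have : (1 : ℝ) ≤ r := by exact_mod_cast hr1
    linarith
  have hKr : (r : ℝ) / L ≤ K := by
    rw [div_le_iff₀ (by exact_mod_cast hLpos : (0 : ℝ) < L)]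
    have : (r : ℝ) ≤ (L : ℝ) * K := by exact_mod_cast hKLr
    linarith [this]
  have hmean : ε / (2 * L) ≤ (1 / (2 * (r : ℝ))) * ∑ s ∈ Finset.Icc (-(r : ℤ)) (r : ℤ), |φ s| := by
    have h1 : ε / (2 * L) = (1 / (2 * (r : ℝ))) * (((r : ℝ) / L) * ε) := by
      field_simp
    rw [h1]
    apply mul_le_mul_of_nonneg_left _ (one_div_nonneg.mpr (by positivity))
    calc (r : ℝ) / L * ε ≤ (K : ℝ) * ε := mul_le_mul_of_nonneg_right hKr (le_of_lt hεpos)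
      _ ≤ _ := hsum
  have hNr := hN r hrN
  rw [Real.dist_eq, sub_zero, abs_of_nonneg (mean_nonneg _ _)] at hNr
  have hLR : (0 : ℝ) < L := by exact_mod_cast hLpos
  have : ε / (4 * L) < ε / (2 * L) := by
    apply div_lt_div_of_pos_left hεpos (by positivity)
    linarith
  linarith

end S16

namespace S16

noncomputable def Ker (c : ℤ → ℝ) (t s : ℤ) : ℝ := ∏ u ∈ Finset.Icc s t, (1 + c u)⁻¹

noncomputable def Op (c H : ℤ → ℝ) (t : ℤ) : ℝ := ∑' m : ℕ, Ker c t (t - (m : ℤ)) * H (t - (m : ℤ))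

section Kernel

variable {c : ℤ → ℝ} {cm : ℝ}

lemma beta_nonneg (hcm0 : 0 < cm) : 0 ≤ (1 + cm)⁻¹ := by positivity

lemma beta_lt_one (hcm0 : 0 < cm) : (1 + cm)⁻¹ < 1 := by
  rw [inv_lt_one_iff₀]
  right
  linarith

lemma one_add_c_pos (hcm0 : 0 < cm) (hc : ∀ u, cm ≤ c u) (u : ℤ) : 0 < 1 + c u := by
  have := hc u
  linarith

lemma Ker_factor_le (hcm0 : 0 < cm) (hc : ∀ u, cm ≤ c u) (u : ℤ) :
    (1 + c u)⁻¹ ≤ (1 + cm)⁻¹ := by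
  apply inv_anti₀ (by linarith)
  have := hc u
  linarith

lemma Ker_nonneg (hcm0 : 0 < cm) (hc : ∀ u, cm ≤ c u) (t s : ℤ) : 0 ≤ Ker c t s :=
  Finset.prod_nonneg fun u _ => le_of_lt (inv_pos.mpr (one_add_c_pos hcm0 hc u))

lemma card_Icc_sub (t : ℤ) (m : ℕ) : (Finset.Icc (t - (m : ℤ)) t).card = m + 1 := by
  rw [Int.card_Icc]
  omega

lemma Ker_le (hcm0 : 0 < cm) (hc : ∀ u, cm ≤ c u) (t : ℤ) (m : ℕ) :
    Ker c t (t - (m : ℤ)) ≤ (1 + cm)⁻¹ ^ (m + 1) := by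
  have h1 : Ker c t (t - (m : ℤ)) ≤ ∏ _u ∈ Finset.Icc (t - (m : ℤ)) t, (1 + cm)⁻¹ := by
    apply Finset.prod_le_prod
    · intro u _
      exact le_of_lt (inv_pos.mpr (one_add_c_pos hcm0 hc u))
    · intro u _
      exact Ker_factor_le hcm0 hc u
  rw [Finset.prod_const, card_Icc_sub] at h1
  exact h1

lemma summable_geo_mul (hcm0 : 0 < cm) (B : ℝ) :
    Summable (fun m : ℕ => (1 + cm)⁻¹ ^ (m + 1) * B) := by
  have h := (summable_geometric_of_lt_one (beta_nonneg hcm0) (beta_lt_one hcm0)).mul_right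
    ((1 + cm)⁻¹ * B)
  apply h.congr
  intro m
  rw [pow_succ]
  ring

lemma tsum_geo_mul (hcm0 : 0 < cm) (B : ℝ) :
    ∑' m : ℕ, (1 + cm)⁻¹ ^ (m + 1) * B = B / cm := by
  have h1 : ∀ m : ℕ, (1 + cm)⁻¹ ^ (m + 1) * B = (1 + cm)⁻¹ ^ m * ((1 + cm)⁻¹ * B) := by
    intro m
    rw [pow_succ]
    ring
  rw [tsum_congr h1, tsum_mul_right, tsum_geometric_of_lt_one (beta_nonneg hcm0) (beta_lt_one hcm0)]
  have h2 : (1 : ℝ) - (1 + cm)⁻¹ = cm / (1 + cm) := by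
    field_simp
    ring
  rw [h2]
  field_simp

lemma Op_summable (hcm0 : 0 < cm) (hc : ∀ u, cm ≤ c u) {H : ℤ → ℝ} {B : ℝ}
    (hH : ∀ u, |H u| ≤ B) (t : ℤ) :
    Summable (fun m : ℕ => Ker c t (t - (m : ℤ)) * H (t - (m : ℤ))) := by
  apply Summable.of_norm_bounded (summable_geo_mul hcm0 B)
  intro m
  rw [Real.norm_eq_abs, abs_mul, abs_of_nonneg (Ker_nonneg hcm0 hc _ _)]
  apply mul_le_mul (Ker_le hcm0 hc t m) (hH _) (abs_nonneg _)
  positivity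

lemma Op_bound (hcm0 : 0 < cm) (hc : ∀ u, cm ≤ c u) {H : ℤ → ℝ} {B : ℝ}
    (hH : ∀ u, |H u| ≤ B) (t : ℤ) : |Op c H t| ≤ B / cm := by
  have hs := Op_summable hcm0 hc hH t
  have h1 : ‖Op c H t‖ ≤ ∑' m : ℕ, ‖Ker c t (t - (m : ℤ)) * H (t - (m : ℤ))‖ := by
    apply norm_tsum_le_tsum_norm
    apply hs.abs
  rw [Real.norm_eq_abs] at h1
  refine le_trans h1 ?_
  rw [← tsum_geo_mul hcm0 B]
  apply Summable.tsum_le_tsum _ hs.abs (summable_geo_mul hcm0 B)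
  intro m
  rw [abs_mul, abs_of_nonneg (Ker_nonneg hcm0 hc _ _)]
  apply mul_le_mul (Ker_le hcm0 hc t m) (hH _) (abs_nonneg _)
  positivity

lemma Icc_insert_top (a t : ℤ) (h : a ≤ t) :
    Finset.Icc a t = insert t (Finset.Icc a (t - 1)) := by
  ext z
  simp only [Finset.mem_Icc, Finset.mem_insert]
  omega

lemma Icc_insert_bot (a t : ℤ) (h : a ≤ t) :
    Finset.Icc a t = insert a (Finset.Icc (a + 1) t) := by
  ext z
  simp only [Finset.mem_Icc, Finset.mem_insert]
  omega

lemma Ker_self (t : ℤ) : Ker c t t = (1 + c t)⁻¹ := by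
  rw [Ker, Finset.Icc_self, Finset.prod_singleton]

lemma Ker_split_top (t : ℤ) (m : ℕ) :
    Ker c t (t - ((m : ℤ) + 1)) = (1 + c t)⁻¹ * Ker c (t - 1) ((t - 1) - (m : ℤ)) := by
  simp only [Ker]
  rw [Icc_insert_top (t - ((m : ℤ) + 1)) t (by omega)]
  rw [Finset.prod_insert (by simp only [Finset.mem_Icc]; omega)]
  have e : t - ((m : ℤ) + 1) = (t - 1) - (m : ℤ) := by ring
  rw [e]

lemma Ker_split_bot (t : ℤ) (m : ℕ) :
    Ker c t (t - ((m : ℤ) + 1)) = (1 + c (t - (m : ℤ) - 1))⁻¹ * Ker c t (t - (m : ℤ)) := by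
  rw [Ker, Ker, Icc_insert_bot (t - ((m : ℤ) + 1)) t (by omega)]
  rw [Finset.prod_insert (by simp only [Finset.mem_Icc]; omega)]
  have e1 : t - ((m : ℤ) + 1) + 1 = t - (m : ℤ) := by ring
  have e2 : t - ((m : ℤ) + 1) = t - (m : ℤ) - 1 := by ring
  rw [e1, e2]

lemma Op_rec (hcm0 : 0 < cm) (hc : ∀ u, cm ≤ c u) {H : ℤ → ℝ} {B : ℝ}
    (hH : ∀ u, |H u| ≤ B) (t : ℤ) :
    (1 + c t) * Op c H t = Op c H (t - 1) + H t := by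
  have hs := Op_summable hcm0 hc hH t
  have hne : (1 + c t) ≠ 0 := ne_of_gt (one_add_c_pos hcm0 hc t)
  have h0 : Op c H t = Ker c t t * H t
      + ∑' m : ℕ, Ker c t (t - ((m : ℕ) + 1 : ℕ)) * H (t - ((m : ℕ) + 1 : ℕ)) := by
    rw [Op]
    rw [Summable.tsum_eq_zero_add hs]
    simp only [Nat.cast_zero, sub_zero]
  have h1 : ∀ m : ℕ, Ker c t (t - ((m : ℕ) + 1 : ℕ)) * H (t - ((m : ℕ) + 1 : ℕ))
      = (1 + c t)⁻¹ * (Ker c (t - 1) ((t - 1) - (m : ℤ)) * H ((t - 1) - (m : ℤ))) := by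
    intro m
    have e : ((m + 1 : ℕ) : ℤ) = (m : ℤ) + 1 := by push_cast; ring
    rw [e, Ker_split_top]
    have e2 : t - ((m : ℤ) + 1) = t - 1 - (m : ℤ) := by ring
    rw [e2]
    ring
  rw [h0, tsum_congr h1, tsum_mul_left, Ker_self]
  have hOp : Op c H (t - 1) = ∑' m : ℕ, Ker c (t - 1) (t - 1 - (m : ℤ)) * H (t - 1 - (m : ℤ)) := rfl
  rw [← hOp]
  field_simp
  ring

lemma Op_sub (hcm0 : 0 < cm) (hc : ∀ u, cm ≤ c u) {H1 H2 : ℤ → ℝ} {B1 B2 : ℝ}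
    (hH1 : ∀ u, |H1 u| ≤ B1) (hH2 : ∀ u, |H2 u| ≤ B2) (t : ℤ) :
    Op c (fun u => H1 u - H2 u) t = Op c H1 t - Op c H2 t := by
  rw [Op, Op, Op, ← Summable.tsum_sub (Op_summable hcm0 hc hH1 t) (Op_summable hcm0 hc hH2 t)]
  apply tsum_congr
  intro m
  ring

lemma Op_add (hcm0 : 0 < cm) (hc : ∀ u, cm ≤ c u) {H1 H2 : ℤ → ℝ} {B1 B2 : ℝ}
    (hH1 : ∀ u, |H1 u| ≤ B1) (hH2 : ∀ u, |H2 u| ≤ B2) (t : ℤ) :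
    Op c (fun u => H1 u + H2 u) t = Op c H1 t + Op c H2 t := by
  rw [Op, Op, Op, ← Summable.tsum_add (Op_summable hcm0 hc hH1 t) (Op_summable hcm0 hc hH2 t)]
  apply tsum_congr
  intro m
  ring

lemma Op_unique (hcm0 : 0 < cm) (hc : ∀ u, cm ≤ c u) {H y : ℤ → ℝ} {B By : ℝ}
    (hH : ∀ u, |H u| ≤ B) (hy : ∀ u, |y u| ≤ By)
    (hrec : ∀ t, (1 + c t) * y t = y (t - 1) + H t) (t : ℤ) :
    y t = Op c H t := by
  have hne : ∀ u, (1 + c u) ≠ 0 := fun u => ne_of_gt (one_add_c_pos hcm0 hc u)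
  have hexp : ∀ u, y u = (1 + c u)⁻¹ * (y (u - 1) + H u) := by
    intro u
    rw [← hrec u, ← mul_assoc, inv_mul_cancel₀ (hne u), one_mul]
  have claim : ∀ m : ℕ, y t = (∑ k ∈ Finset.range (m + 1), Ker c t (t - (k : ℤ)) * H (t - (k : ℤ)))
      + Ker c t (t - (m : ℤ)) * y (t - (m : ℤ) - 1) := by
    intro m
    induction m with
    | zero =>
      rw [Finset.sum_range_one]
      simp only [Nat.cast_zero, sub_zero]
      rw [Ker_self, hexp t]
      ring
    | succ m ih =>
      have hKer : Ker c t (t - ((m + 1 : ℕ) : ℤ)) = (1 + c (t - (m : ℤ) - 1))⁻¹ * Ker c t (t - (m : ℤ)) := by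
        have e : ((m + 1 : ℕ) : ℤ) = (m : ℤ) + 1 := by push_cast; ring
        rw [e, Ker_split_bot t m]
      have e4 : t - ((m + 1 : ℕ) : ℤ) = t - (m : ℤ) - 1 := by push_cast; ring
      calc y t = (∑ k ∈ Finset.range (m + 1), Ker c t (t - (k : ℤ)) * H (t - (k : ℤ)))
            + Ker c t (t - (m : ℤ)) * y (t - (m : ℤ) - 1) := ih
        _ = (∑ k ∈ Finset.range (m + 1), Ker c t (t - (k : ℤ)) * H (t - (k : ℤ)))
            + Ker c t (t - (m : ℤ)) * ((1 + c (t - (m : ℤ) - 1))⁻¹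
              * (y (t - (m : ℤ) - 1 - 1) + H (t - (m : ℤ) - 1))) := by
            rw [← hexp (t - (m : ℤ) - 1)]
        _ = (∑ k ∈ Finset.range (m + 1 + 1), Ker c t (t - (k : ℤ)) * H (t - (k : ℤ)))
            + Ker c t (t - ((m + 1 : ℕ) : ℤ)) * y (t - ((m + 1 : ℕ) : ℤ) - 1) := by
            rw [Finset.sum_range_succ (n := m + 1), hKer, e4]
            ring
  -- now take limits
  have hs := Op_summable hcm0 hc hH t
  have htail : Filter.Tendsto (fun m : ℕ => Ker c t (t - (m : ℤ)) * y (t - (m : ℤ) - 1))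
      Filter.atTop (nhds 0) := by
    have hb : ∀ m : ℕ, ‖Ker c t (t - (m : ℤ)) * y (t - (m : ℤ) - 1)‖ ≤ (1 + cm)⁻¹ ^ (m + 1) * By := by
      intro m
      rw [Real.norm_eq_abs, abs_mul, abs_of_nonneg (Ker_nonneg hcm0 hc _ _)]
      exact mul_le_mul (Ker_le hcm0 hc t m) (hy _) (abs_nonneg _) (by positivity)
    have hg : Filter.Tendsto (fun m : ℕ => (1 + cm)⁻¹ ^ (m + 1) * By) Filter.atTop (nhds 0) := by
      have h := tendsto_pow_atTop_nhds_zero_of_lt_one (beta_nonneg hcm0) (beta_lt_one hcm0)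
      have h2 := (h.comp (Filter.tendsto_add_atTop_nat 1)).mul_const By
      simpa [Function.comp] using h2
    exact squeeze_zero_norm hb hg
  have hpartial : Filter.Tendsto
      (fun m : ℕ => ∑ k ∈ Finset.range (m + 1), Ker c t (t - (k : ℤ)) * H (t - (k : ℤ)))
      Filter.atTop (nhds (Op c H t)) := by
    have h := hs.hasSum.tendsto_sum_nat
    have h2 := h.comp (Filter.tendsto_add_atTop_nat 1)
    exact h2
  have hy2 : Filter.Tendsto
      (fun m : ℕ => (∑ k ∈ Finset.range (m + 1), Ker c t (t - (k : ℤ)) * H (t - (k : ℤ)))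
        + Ker c t (t - (m : ℤ)) * y (t - (m : ℤ) - 1)) Filter.atTop (nhds (Op c H t + 0)) :=
    hpartial.add htail
  rw [add_zero] at hy2
  have hconst : Filter.Tendsto (fun _ : ℕ => y t) Filter.atTop (nhds (y t)) := tendsto_const_nhds
  have : (fun _ : ℕ => y t) = (fun m : ℕ =>
      (∑ k ∈ Finset.range (m + 1), Ker c t (t - (k : ℤ)) * H (t - (k : ℤ)))
        + Ker c t (t - (m : ℤ)) * y (t - (m : ℤ) - 1)) := by
    funext m
    exact claim m
  rw [this] at hconst
  exact tendsto_nhds_unique hconst hy2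

end Kernel

end S16

namespace S16

lemma prod_diff_le {β : ℝ} (hβ0 : 0 ≤ β) (hβ1 : β ≤ 1) (s : Finset ℤ) (f g : ℤ → ℝ)
    (hf : ∀ u ∈ s, 0 ≤ f u ∧ f u ≤ β) (hg : ∀ u ∈ s, 0 ≤ g u ∧ g u ≤ β) :
    |∏ u ∈ s, f u - ∏ u ∈ s, g u| ≤ (∑ u ∈ s, |f u - g u|) * β ^ (s.card - 1) := by
  classical
  induction s using Finset.induction_on with
  | empty => simp
  | @insert a s' hns ih =>
    have hf' : ∀ u ∈ s', 0 ≤ f u ∧ f u ≤ β := fun u hu => hf u (Finset.mem_insert_of_mem hu)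
    have hg' : ∀ u ∈ s', 0 ≤ g u ∧ g u ≤ β := fun u hu => hg u (Finset.mem_insert_of_mem hu)
    have ihs := ih hf' hg'
    have hfa := hf a (Finset.mem_insert_self a s')
    have hga := hg a (Finset.mem_insert_self a s')
    rw [Finset.prod_insert hns, Finset.prod_insert hns, Finset.sum_insert hns,
      Finset.card_insert_of_notMem hns]
    have hsplit : f a * ∏ u ∈ s', f u - g a * ∏ u ∈ s', g u
        = f a * (∏ u ∈ s', f u - ∏ u ∈ s', g u) + (f a - g a) * ∏ u ∈ s', g u := by ring
    have hprodg : ∏ u ∈ s', g u ≤ β ^ s'.card := by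
      calc ∏ u ∈ s', g u ≤ ∏ _u ∈ s', β :=
            Finset.prod_le_prod (fun u hu => (hg' u hu).1) (fun u hu => (hg' u hu).2)
        _ = β ^ s'.card := Finset.prod_const β
    have hprodg0 : 0 ≤ ∏ u ∈ s', g u := Finset.prod_nonneg fun u hu => (hg' u hu).1
    have hsum0 : 0 ≤ ∑ u ∈ s', |f u - g u| := Finset.sum_nonneg fun u _ => abs_nonneg _
    have hstep : β * β ^ (s'.card - 1) ≤ β ^ s'.card := by
      cases hc : s'.card with
      | zero => simpa using hβ1
      | succ n =>
        rw [Nat.succ_sub_one, pow_succ]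
        exact le_of_eq (by ring)
    calc |f a * ∏ u ∈ s', f u - g a * ∏ u ∈ s', g u|
        ≤ f a * |∏ u ∈ s', f u - ∏ u ∈ s', g u| + |f a - g a| * (∏ u ∈ s', g u) := by
          rw [hsplit]
          refine le_trans (abs_add_le _ _) ?_
          rw [abs_mul, abs_mul, abs_of_nonneg hfa.1, abs_of_nonneg hprodg0]
      _ ≤ β * ((∑ u ∈ s', |f u - g u|) * β ^ (s'.card - 1)) + |f a - g a| * β ^ s'.card := by
          have h1 : f a * |∏ u ∈ s', f u - ∏ u ∈ s', g u|
              ≤ β * ((∑ u ∈ s', |f u - g u|) * β ^ (s'.card - 1)) :=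
            mul_le_mul hfa.2 ihs (abs_nonneg _) hβ0
          have h2 : |f a - g a| * (∏ u ∈ s', g u) ≤ |f a - g a| * β ^ s'.card :=
            mul_le_mul_of_nonneg_left hprodg (abs_nonneg _)
          linarith
      _ = (∑ u ∈ s', |f u - g u|) * (β * β ^ (s'.card - 1)) + |f a - g a| * β ^ s'.card := by ring
      _ ≤ (∑ u ∈ s', |f u - g u|) * β ^ s'.card + |f a - g a| * β ^ s'.card := by
          have := mul_le_mul_of_nonneg_left hstep hsum0
          linarith
      _ = (|f a - g a| + ∑ u ∈ s', |f u - g u|) * β ^ (s'.card + 1 - 1) := by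
          simp only [Nat.add_sub_cancel]
          ring

lemma Ker_shift (c : ℤ → ℝ) (τ t : ℤ) (m : ℕ) :
    Ker c (t + τ) (t + τ - (m : ℤ)) = ∏ v ∈ Finset.Icc (t - (m : ℤ)) t, (1 + c (v + τ))⁻¹ := by
  rw [Ker]
  have e : t + τ - (m : ℤ) = (t - (m : ℤ)) + τ := by ring
  rw [e, ← Finset.map_add_right_Icc (t - (m : ℤ)) t τ, Finset.prod_map]
  simp [addRightEmbedding]

lemma inv_one_add_diff {a b : ℝ} (ha : 0 ≤ a) (hb : 0 ≤ b) :
    |(1 + a)⁻¹ - (1 + b)⁻¹| ≤ |a - b| := by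
  have h1 : (0 : ℝ) < 1 + a := by linarith
  have h2 : (0 : ℝ) < 1 + b := by linarith
  have he : (1 + a)⁻¹ - (1 + b)⁻¹ = (b - a) / ((1 + a) * (1 + b)) := by
    field_simp
    ring
  rw [he, abs_div, abs_sub_comm]
  have hd : 1 ≤ |(1 + a) * (1 + b)| := by
    rw [abs_of_pos (by positivity)]
    nlinarith
  calc |a - b| / |(1 + a) * (1 + b)| ≤ |a - b| / 1 := by
        apply div_le_div_of_nonneg_left (abs_nonneg _) one_pos hd -- careful direction
    _ = |a - b| := by rw [div_one]

lemma summable_mul_geo {β : ℝ} (hβ0 : 0 ≤ β) (hβ1 : β < 1) :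
    Summable (fun m : ℕ => ((m : ℝ) + 1) * β ^ m) := by
  have h1 := summable_pow_mul_geometric_of_norm_lt_one (R := ℝ) 1
    (r := β) (by rw [Real.norm_eq_abs, abs_of_nonneg hβ0]; exact hβ1)
  have h2 := summable_geometric_of_lt_one hβ0 hβ1
  have h3 := h1.add h2
  apply h3.congr
  intro m
  simp [pow_one]
  ring

set_option maxHeartbeats 1000000 in
lemma Op_AP {c u : ℤ → ℝ} {cm : ℝ} (hcm0 : 0 < cm) (hc : ∀ s, cm ≤ c s)
    (hcap : APSequence c) (huap : APSequence u) : APSequence (Op c u) := by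
  obtain ⟨B, hB0, hB⟩ := ap_bounded huap
  set β : ℝ := (1 + cm)⁻¹ with hβdef
  have hβ0 : 0 ≤ β := beta_nonneg hcm0
  have hβ1 : β < 1 := beta_lt_one hcm0
  set T1 : ℝ := ∑' m : ℕ, ((m : ℝ) + 1) * β ^ m with hT1def
  have hT1sum : Summable (fun m : ℕ => ((m : ℝ) + 1) * β ^ m) := summable_mul_geo hβ0 hβ1
  have hT10 : 0 ≤ T1 := tsum_nonneg fun m => by positivity
  set C : ℝ := B * T1 + 1 / cm + 1 with hCdef
  have hC0 : 0 < C := by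
    have h1 : 0 < 1 / cm := by positivity
    have h2 : 0 ≤ B * T1 := mul_nonneg hB0 hT10
    rw [hCdef]
    linarith
  apply ap_transfer2 c u hcap huap
  intro ε hε
  refine ⟨ε / C, by positivity, ?_⟩
  intro τ hcτ huτ t
  set ε' : ℝ := ε / C with hε'def
  have hε'0 : 0 < ε' := by positivity
  -- pointwise term bounds
  have hcb : ∀ v, cm ≤ c v := hc
  have hKd : ∀ m : ℕ, |Ker c (t + τ) (t + τ - (m : ℤ)) - Ker c t (t - (m : ℤ))|
      ≤ ((m : ℝ) + 1) * ε' * β ^ m := by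
    intro m
    rw [Ker_shift, Ker]
    have hcard : (Finset.Icc (t - (m : ℤ)) t).card = m + 1 := card_Icc_sub t m
    have h := prod_diff_le hβ0 (le_of_lt hβ1) (Finset.Icc (t - (m : ℤ)) t)
      (fun v => (1 + c (v + τ))⁻¹) (fun v => (1 + c v)⁻¹)
      (fun v _ => ⟨le_of_lt (inv_pos.mpr (one_add_c_pos hcm0 hc (v + τ))),
        Ker_factor_le hcm0 hc (v + τ)⟩)
      (fun v _ => ⟨le_of_lt (inv_pos.mpr (one_add_c_pos hcm0 hc v)),
        Ker_factor_le hcm0 hc v⟩)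
    rw [hcard] at h
    simp only [Nat.add_sub_cancel] at h
    refine le_trans h ?_
    have hterm : ∀ v ∈ Finset.Icc (t - (m : ℤ)) t,
        |(1 + c (v + τ))⁻¹ - (1 + c v)⁻¹| ≤ ε' := by
      intro v _
      have h1 : (0 : ℝ) ≤ c (v + τ) := le_trans (le_of_lt hcm0) (hc _)
      have h2 : (0 : ℝ) ≤ c v := le_trans (le_of_lt hcm0) (hc _)
      refine le_trans (inv_one_add_diff h1 h2) ?_
      exact le_of_lt (hcτ v)
    have hsum : ∑ v ∈ Finset.Icc (t - (m : ℤ)) t, |(1 + c (v + τ))⁻¹ - (1 + c v)⁻¹|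
        ≤ ((m : ℝ) + 1) * ε' := by
      calc ∑ v ∈ Finset.Icc (t - (m : ℤ)) t, |(1 + c (v + τ))⁻¹ - (1 + c v)⁻¹|
          ≤ ∑ _v ∈ Finset.Icc (t - (m : ℤ)) t, ε' := Finset.sum_le_sum hterm
        _ = ((m : ℝ) + 1) * ε' := by
            rw [Finset.sum_const, nsmul_eq_mul, hcard]
            push_cast
            ring
    calc (∑ v ∈ Finset.Icc (t - (m : ℤ)) t, |(1 + c (v + τ))⁻¹ - (1 + c v)⁻¹|) * β ^ m
        ≤ (((m : ℝ) + 1) * ε') * β ^ m := by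
          apply mul_le_mul_of_nonneg_right hsum (by positivity)
      _ = ((m : ℝ) + 1) * ε' * β ^ m := by ring
  have hterm : ∀ m : ℕ,
      |Ker c (t + τ) (t + τ - (m : ℤ)) * u (t + τ - (m : ℤ)) - Ker c t (t - (m : ℤ)) * u (t - (m : ℤ))|
        ≤ ((m : ℝ) + 1) * ε' * β ^ m * B + β ^ (m + 1) * ε' := by
    intro m
    have hsplit : Ker c (t + τ) (t + τ - (m : ℤ)) * u (t + τ - (m : ℤ))
        - Ker c t (t - (m : ℤ)) * u (t - (m : ℤ))
        = (Ker c (t + τ) (t + τ - (m : ℤ)) - Ker c t (t - (m : ℤ))) * u (t + τ - (m : ℤ))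
          + Ker c t (t - (m : ℤ)) * (u (t + τ - (m : ℤ)) - u (t - (m : ℤ))) := by ring
    have hu2 : |u (t + τ - (m : ℤ)) - u (t - (m : ℤ))| ≤ ε' := by
      have e : t + τ - (m : ℤ) = (t - (m : ℤ)) + τ := by ring
      rw [e]
      exact le_of_lt (huτ _)
    calc |Ker c (t + τ) (t + τ - (m : ℤ)) * u (t + τ - (m : ℤ))
        - Ker c t (t - (m : ℤ)) * u (t - (m : ℤ))|
        ≤ |Ker c (t + τ) (t + τ - (m : ℤ)) - Ker c t (t - (m : ℤ))| * |u (t + τ - (m : ℤ))|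
          + Ker c t (t - (m : ℤ)) * |u (t + τ - (m : ℤ)) - u (t - (m : ℤ))| := by
          rw [hsplit]
          refine le_trans (abs_add_le _ _) ?_
          rw [abs_mul, abs_mul, abs_of_nonneg (Ker_nonneg hcm0 hc _ _)]
      _ ≤ (((m : ℝ) + 1) * ε' * β ^ m) * B + β ^ (m + 1) * ε' := by
          have h1 : |Ker c (t + τ) (t + τ - (m : ℤ)) - Ker c t (t - (m : ℤ))|
              * |u (t + τ - (m : ℤ))| ≤ (((m : ℝ) + 1) * ε' * β ^ m) * B :=
            mul_le_mul (hKd m) (hB _) (abs_nonneg _) (by positivity)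
          have h2 : Ker c t (t - (m : ℤ)) * |u (t + τ - (m : ℤ)) - u (t - (m : ℤ))|
              ≤ β ^ (m + 1) * ε' :=
            mul_le_mul (Ker_le hcm0 hc t m) hu2 (abs_nonneg _) (by positivity)
          linarith
      _ = ((m : ℝ) + 1) * ε' * β ^ m * B + β ^ (m + 1) * ε' := by ring
  -- now sum up
  have hsum1 : Summable (fun m : ℕ => Ker c (t + τ) (t + τ - (m : ℤ)) * u (t + τ - (m : ℤ))) :=
    Op_summable hcm0 hc hB (t + τ)
  have hsum2 : Summable (fun m : ℕ => Ker c t (t - (m : ℤ)) * u (t - (m : ℤ))) :=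
    Op_summable hcm0 hc hB t
  have hgsum : Summable (fun m : ℕ => ((m : ℝ) + 1) * ε' * β ^ m * B + β ^ (m + 1) * ε') := by
    apply Summable.add
    · have := (summable_mul_geo hβ0 hβ1).mul_right (ε' * B)
      apply this.congr
      intro m
      ring
    · have := summable_geo_mul hcm0 ε'
      exact this.congr (fun m => rfl)
  have hdsum : Summable (fun m : ℕ => Ker c (t + τ) (t + τ - (m : ℤ)) * u (t + τ - (m : ℤ))
      - Ker c t (t - (m : ℤ)) * u (t - (m : ℤ))) := hsum1.sub hsum2
  have h1 : Op c u (t + τ) - Op c u t = ∑' m : ℕ,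
      (Ker c (t + τ) (t + τ - (m : ℤ)) * u (t + τ - (m : ℤ))
        - Ker c t (t - (m : ℤ)) * u (t - (m : ℤ))) := by
    rw [Op, Op, ← Summable.tsum_sub hsum1 hsum2]
  rw [h1]
  have h2 : |∑' m : ℕ, (Ker c (t + τ) (t + τ - (m : ℤ)) * u (t + τ - (m : ℤ))
      - Ker c t (t - (m : ℤ)) * u (t - (m : ℤ)))|
      ≤ ∑' m : ℕ, (((m : ℝ) + 1) * ε' * β ^ m * B + β ^ (m + 1) * ε') := by
    have hn : ‖∑' m : ℕ, (Ker c (t + τ) (t + τ - (m : ℤ)) * u (t + τ - (m : ℤ))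
        - Ker c t (t - (m : ℤ)) * u (t - (m : ℤ)))‖
        ≤ ∑' m : ℕ, ‖Ker c (t + τ) (t + τ - (m : ℤ)) * u (t + τ - (m : ℤ))
          - Ker c t (t - (m : ℤ)) * u (t - (m : ℤ))‖ := by
      apply norm_tsum_le_tsum_norm
      apply hdsum.abs
    rw [Real.norm_eq_abs] at hn
    refine le_trans hn ?_
    apply Summable.tsum_le_tsum _ hdsum.abs hgsum
    intro m
    exact hterm m
  have h3 : ∑' m : ℕ, (((m : ℝ) + 1) * ε' * β ^ m * B + β ^ (m + 1) * ε')
      = ε' * (B * T1 + 1 / cm) := by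
    rw [Summable.tsum_add]
    · have ha : ∑' m : ℕ, ((m : ℝ) + 1) * ε' * β ^ m * B = T1 * (ε' * B) := by
        rw [hT1def, ← tsum_mul_right]
        apply tsum_congr
        intro m
        ring
      have hb2 : ∑' m : ℕ, β ^ (m + 1) * ε' = ε' / cm := tsum_geo_mul hcm0 ε'
      rw [ha, hb2]
      field_simp
    · have := (summable_mul_geo hβ0 hβ1).mul_right (ε' * B)
      apply this.congr
      intro m
      ring
    · exact (summable_geo_mul hcm0 ε').congr (fun m => rfl)
  calc |∑' m : ℕ, (Ker c (t + τ) (t + τ - (m : ℤ)) * u (t + τ - (m : ℤ))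
      - Ker c t (t - (m : ℤ)) * u (t - (m : ℤ)))|
      ≤ ε' * (B * T1 + 1 / cm) := by rw [← h3]; exact h2
    _ < ε' * C := by
        apply mul_lt_mul_of_pos_left _ hε'0
        rw [hCdef]
        linarith
    _ = ε := by
        rw [hε'def]
        field_simp

end S16

namespace S16

lemma card_Icc_sym (r : ℕ) : ((Finset.Icc (-(r : ℤ)) (r : ℤ)).card : ℝ) = 2 * r + 1 := by
  have h3 : ((Finset.Icc (-(r : ℤ)) (r : ℤ)).card : ℤ) = 2 * (r : ℤ) + 1 := by
    rw [Int.card_Icc]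
    omega
  exact_mod_cast h3

set_option maxHeartbeats 1000000 in
lemma Op_PAP0 {c φ : ℤ → ℝ} {cm : ℝ} (hcm0 : 0 < cm) (hc : ∀ s, cm ≤ c s)
    (hφ : PAPZeroSeq φ) : PAPZeroSeq (Op c φ) := by
  obtain ⟨B, hB0, hB⟩ := papzero_bound_nonneg hφ
  set β : ℝ := (1 + cm)⁻¹ with hβdef
  have hβ0 : 0 ≤ β := beta_nonneg hcm0
  have hβ1 : β < 1 := beta_lt_one hcm0
  set Am : ℕ → ℕ → ℝ := fun m r =>
    (1 / (2 * (r : ℝ))) * ∑ t ∈ Finset.Icc (-(r : ℤ)) (r : ℤ), |φ (t - (m : ℤ))| with hAmdef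
  have hAm0 : ∀ m r, 0 ≤ Am m r := fun m r => mean_nonneg _ r
  have hAmtd : ∀ m : ℕ, Filter.Tendsto (fun r => Am m r) Filter.atTop (nhds 0) :=
    fun m => (papzero_shift (m : ℤ) hφ).2
  have hAmle : ∀ m r : ℕ, 1 ≤ r → Am m r ≤ 2 * B := by
    intro m r hr
    have hr1 : (1 : ℝ) ≤ r := by exact_mod_cast hr
    have hrpos : (0 : ℝ) < 2 * r := by linarith
    have hsum : ∑ t ∈ Finset.Icc (-(r : ℤ)) (r : ℤ), |φ (t - (m : ℤ))| ≤ (2 * r + 1) * B := by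
      calc ∑ t ∈ Finset.Icc (-(r : ℤ)) (r : ℤ), |φ (t - (m : ℤ))|
          ≤ ∑ _t ∈ Finset.Icc (-(r : ℤ)) (r : ℤ), B := Finset.sum_le_sum fun t _ => hB _
        _ = (2 * r + 1) * B := by rw [Finset.sum_const, nsmul_eq_mul, card_Icc_sym]
    calc Am m r ≤ (1 / (2 * (r : ℝ))) * ((2 * r + 1) * B) :=
          mul_le_mul_of_nonneg_left hsum (one_div_nonneg.mpr (le_of_lt hrpos))
      _ ≤ 2 * B := by
          rw [one_div_mul_eq_div, div_le_iff₀ hrpos]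
          nlinarith
  have hsb : ∀ t : ℤ, Summable (fun m : ℕ => β ^ (m + 1) * |φ (t - (m : ℤ))|) := by
    intro t
    apply Summable.of_nonneg_of_le (fun m => by positivity) (fun m => ?_)
      (summable_geo_mul hcm0 B)
    exact mul_le_mul_of_nonneg_left (hB _) (by positivity)
  have hOpsum : ∀ t, |Op c φ t| ≤ ∑' m : ℕ, β ^ (m + 1) * |φ (t - (m : ℤ))| := by
    intro t
    have hs := Op_summable hcm0 hc hB t
    have hn : ‖Op c φ t‖ ≤ ∑' m : ℕ, ‖Ker c t (t - (m : ℤ)) * φ (t - (m : ℤ))‖ := by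
      apply norm_tsum_le_tsum_norm
      apply hs.abs
    rw [Real.norm_eq_abs] at hn
    refine le_trans hn ?_
    apply Summable.tsum_le_tsum _ hs.abs (hsb t)
    intro m
    rw [abs_mul, abs_of_nonneg (Ker_nonneg hcm0 hc _ _)]
    exact mul_le_mul_of_nonneg_right (Ker_le hcm0 hc t m) (abs_nonneg _)
  have hsAm : ∀ r : ℕ, 1 ≤ r → Summable (fun m : ℕ => β ^ (m + 1) * Am m r) := by
    intro r hr
    apply Summable.of_nonneg_of_le (fun m => mul_nonneg (by positivity) (hAm0 m r))
      (fun m => ?_) (summable_geo_mul hcm0 (2 * B))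
    exact mul_le_mul_of_nonneg_left (hAmle m r hr) (by positivity)
  have key : ∀ r : ℕ, 1 ≤ r →
      (1 / (2 * (r : ℝ))) * ∑ t ∈ Finset.Icc (-(r : ℤ)) (r : ℤ), |Op c φ t|
        ≤ ∑' m : ℕ, β ^ (m + 1) * Am m r := by
    intro r hr
    have h1 : ∑ t ∈ Finset.Icc (-(r : ℤ)) (r : ℤ), |Op c φ t|
        ≤ ∑ t ∈ Finset.Icc (-(r : ℤ)) (r : ℤ), ∑' m : ℕ, β ^ (m + 1) * |φ (t - (m : ℤ))| :=
      Finset.sum_le_sum fun t _ => hOpsum t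
    have h2 : ∑ t ∈ Finset.Icc (-(r : ℤ)) (r : ℤ), ∑' m : ℕ, β ^ (m + 1) * |φ (t - (m : ℤ))|
        = ∑' m : ℕ, ∑ t ∈ Finset.Icc (-(r : ℤ)) (r : ℤ), β ^ (m + 1) * |φ (t - (m : ℤ))| :=
      (Summable.tsum_finsetSum (fun t _ => hsb t)).symm
    have h3 : ∀ m : ℕ, (1 / (2 * (r : ℝ)))
        * ∑ t ∈ Finset.Icc (-(r : ℤ)) (r : ℤ), β ^ (m + 1) * |φ (t - (m : ℤ))|
        = β ^ (m + 1) * Am m r := by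
      intro m
      rw [hAmdef]
      simp only [← Finset.mul_sum]
      ring
    have hsint : Summable (fun m : ℕ =>
        ∑ t ∈ Finset.Icc (-(r : ℤ)) (r : ℤ), β ^ (m + 1) * |φ (t - (m : ℤ))|) := by
      apply Summable.of_nonneg_of_le
        (fun m => Finset.sum_nonneg fun t _ => by positivity) (fun m => ?_)
        (summable_geo_mul hcm0 ((2 * r + 1) * B))
      calc ∑ t ∈ Finset.Icc (-(r : ℤ)) (r : ℤ), β ^ (m + 1) * |φ (t - (m : ℤ))|
          ≤ ∑ _t ∈ Finset.Icc (-(r : ℤ)) (r : ℤ), β ^ (m + 1) * B :=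
            Finset.sum_le_sum fun t _ => mul_le_mul_of_nonneg_left (hB _) (by positivity)
        _ = (2 * r + 1) * (β ^ (m + 1) * B) := by
            rw [Finset.sum_const, nsmul_eq_mul, card_Icc_sym]
        _ = β ^ (m + 1) * ((2 * r + 1) * B) := by ring
    calc (1 / (2 * (r : ℝ))) * ∑ t ∈ Finset.Icc (-(r : ℤ)) (r : ℤ), |Op c φ t|
        ≤ (1 / (2 * (r : ℝ))) * ∑' m : ℕ,
            ∑ t ∈ Finset.Icc (-(r : ℤ)) (r : ℤ), β ^ (m + 1) * |φ (t - (m : ℤ))| := by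
          apply mul_le_mul_of_nonneg_left _ (one_div_nonneg.mpr (by positivity))
          rw [← h2]
          exact h1
      _ = ∑' m : ℕ, (1 / (2 * (r : ℝ)))
            * ∑ t ∈ Finset.Icc (-(r : ℤ)) (r : ℤ), β ^ (m + 1) * |φ (t - (m : ℤ))| := by
          rw [tsum_mul_left]
      _ = ∑' m : ℕ, β ^ (m + 1) * Am m r := tsum_congr h3
  constructor
  · exact ⟨B / cm, fun t => Op_bound hcm0 hc hB t⟩
  · rw [Metric.tendsto_atTop]
    intro ε hε
    obtain ⟨M, hM⟩ : ∃ M : ℕ, β ^ M * (2 * B / cm) < ε / 2 := by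
      have h := tendsto_pow_atTop_nhds_zero_of_lt_one hβ0 hβ1
      obtain ⟨M, hM'⟩ := Metric.tendsto_atTop.mp h ((ε / 2) / (2 * B / cm + 1)) (by positivity)
      refine ⟨M, ?_⟩
      have h1 := hM' M (le_refl M)
      rw [Real.dist_eq, sub_zero, abs_of_nonneg (by positivity)] at h1
      have hD : (0 : ℝ) < 2 * B / cm + 1 := by positivity
      calc β ^ M * (2 * B / cm) ≤ β ^ M * (2 * B / cm + 1) :=
            mul_le_mul_of_nonneg_left (by linarith) (by positivity)
        _ < ((ε / 2) / (2 * B / cm + 1)) * (2 * B / cm + 1) :=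
            mul_lt_mul_of_pos_right h1 hD
        _ = ε / 2 := div_mul_cancel₀ _ (ne_of_gt hD)
    have hfin : Filter.Tendsto (fun r => ∑ m ∈ Finset.range M, β ^ (m + 1) * Am m r)
        Filter.atTop (nhds 0) := by
      have h := tendsto_finset_sum (Finset.range M)
        (fun m (_ : m ∈ Finset.range M) => (hAmtd m).const_mul (β ^ (m + 1)))
      simpa using h
    obtain ⟨N, hN⟩ := Metric.tendsto_atTop.mp hfin (ε / 4) (by linarith)
    refine ⟨max N 1, fun r hr => ?_⟩
    have hr1 : 1 ≤ r := le_trans (le_max_right _ _) hr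
    have hrN : N ≤ r := le_trans (le_max_left _ _) hr
    have hsplit : ∑' m : ℕ, β ^ (m + 1) * Am m r
        = (∑ m ∈ Finset.range M, β ^ (m + 1) * Am m r)
          + ∑' k : ℕ, β ^ ((k + M) + 1) * Am (k + M) r :=
      (Summable.sum_add_tsum_nat_add M (hsAm r hr1)).symm
    have htailsum : Summable (fun k : ℕ => β ^ M * (β ^ (k + 1) * (2 * B))) :=
      (summable_geo_mul hcm0 (2 * B)).mul_left (β ^ M)
    have htail : ∑' k : ℕ, β ^ ((k + M) + 1) * Am (k + M) r ≤ β ^ M * (2 * B / cm) := by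
      have hb : ∀ k : ℕ, β ^ ((k + M) + 1) * Am (k + M) r ≤ β ^ M * (β ^ (k + 1) * (2 * B)) := by
        intro k
        have he : β ^ ((k + M) + 1) = β ^ M * β ^ (k + 1) := by
          rw [← pow_add]
          congr 1
          omega
        rw [he]
        have := hAmle (k + M) r hr1
        calc β ^ M * β ^ (k + 1) * Am (k + M) r ≤ β ^ M * β ^ (k + 1) * (2 * B) :=
              mul_le_mul_of_nonneg_left this (by positivity)
          _ = β ^ M * (β ^ (k + 1) * (2 * B)) := by ring
      have hsummand : Summable (fun k : ℕ => β ^ ((k + M) + 1) * Am (k + M) r) :=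
        (hsAm r hr1).comp_injective (add_left_injective M)
      calc ∑' k : ℕ, β ^ ((k + M) + 1) * Am (k + M) r
          ≤ ∑' k : ℕ, β ^ M * (β ^ (k + 1) * (2 * B)) :=
            Summable.tsum_le_tsum hb hsummand htailsum
        _ = β ^ M * ∑' k : ℕ, β ^ (k + 1) * (2 * B) := tsum_mul_left
        _ = β ^ M * (2 * B / cm) := by rw [tsum_geo_mul hcm0]
    have hfinr := hN r hrN
    rw [Real.dist_eq, sub_zero] at hfinr
    have hfinle : ∑ m ∈ Finset.range M, β ^ (m + 1) * Am m r < ε / 4 :=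
      lt_of_le_of_lt (le_abs_self _) hfinr
    rw [Real.dist_eq, sub_zero, abs_of_nonneg (mean_nonneg _ _)]
    calc (1 / (2 * (r : ℝ))) * ∑ t ∈ Finset.Icc (-(r : ℤ)) (r : ℤ), |Op c φ t|
        ≤ ∑' m : ℕ, β ^ (m + 1) * Am m r := key r hr1
      _ = (∑ m ∈ Finset.range M, β ^ (m + 1) * Am m r)
          + ∑' k : ℕ, β ^ ((k + M) + 1) * Am (k + M) r := hsplit
      _ < ε / 4 + β ^ M * (2 * B / cm) := by
          apply add_lt_add_of_lt_of_le hfinle htail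
      _ < ε / 4 + ε / 2 := by linarith
      _ < ε := by linarith

lemma pap_Op {c H : ℤ → ℝ} {cm : ℝ} (hcm0 : 0 < cm) (hc : ∀ s, cm ≤ c s)
    (hcap : APSequence c) (hH : PseudoAPSeq H) : PseudoAPSeq (Op c H) := by
  obtain ⟨g, φ, hg, hφ, he⟩ := pap_decomp hH
  obtain ⟨Bg, hBg0, hBg⟩ := ap_bounded hg
  obtain ⟨Bφ, hBφ0, hBφ⟩ := papzero_bound_nonneg hφ
  refine pap_mk (g := Op c g) (φ := Op c φ) (Op_AP hcm0 hc hcap hg) (Op_PAP0 hcm0 hc hφ) ?_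
  intro t
  have h1 : Op c H t = Op c (fun u => g u + φ u) t := by
    apply tsum_congr
    intro m
    rw [he]
  rw [h1, Op_add hcm0 hc hBg hBφ t]

end S16

namespace S16

lemma papzero_neg {φ : ℤ → ℝ} (h : PAPZeroSeq φ) : PAPZeroSeq (fun t => -(φ t)) :=
  papzero_mono (χ := fun t => -1 * φ t) (papzero_const_mul (-1) h) (fun t => by simp)

lemma papzero_sub {φ ψ : ℤ → ℝ} (hφ : PAPZeroSeq φ) (hψ : PAPZeroSeq ψ) :
    PAPZeroSeq (fun t => φ t - ψ t) := by
  have := papzero_add hφ (papzero_neg hψ)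
  simpa [sub_eq_add_neg] using this

lemma le_limit_bound {A B : ℝ} {e : ℕ → ℝ} (he : Filter.Tendsto e Filter.atTop (nhds 0))
    (h : ∀ m, A ≤ B + e m) : A ≤ B := by
  have h2 : Filter.Tendsto (fun m => B + e m) Filter.atTop (nhds B) := by
    simpa using tendsto_const_nhds.add he
  exact ge_of_tendsto h2 (Filter.Eventually.of_forall h)

lemma eq_of_abs_le_tendsto {A : ℝ} {e : ℕ → ℝ} (he : Filter.Tendsto e Filter.atTop (nhds 0))
    (h : ∀ m, |A| ≤ e m) : A = 0 := by
  have h1 : |A| ≤ 0 := le_limit_bound he (fun m => by simpa using h m)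
  have := abs_nonneg A
  have : |A| = 0 := le_antisymm h1 this
  exact abs_eq_zero.mp this

lemma lip_val (F : ℝ → ℝ) (L : ℝ) (hL : 0 ≤ L)
    (hLip : ∀ x y : ℝ, |F x - F y| ≤ L * |x - y|) (h0 : F 0 = 0) {z r' : ℝ} (hz : |z| ≤ r') :
    |F z| ≤ L * r' := by
  have := hLip z 0
  rw [h0, sub_zero, sub_zero] at this
  exact le_trans this (mul_le_mul_of_nonneg_left hz hL)

lemma pap_unif_limit (F : ℤ → ℝ) (fk : ℕ → ℤ → ℝ) (e : ℕ → ℝ)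
    (hfk : ∀ m, PseudoAPSeq (fk m)) (he0 : ∀ m, 0 ≤ e m)
    (hmono : ∀ m m' : ℕ, m ≤ m' → e m' ≤ e m)
    (hetd : Filter.Tendsto e Filter.atTop (nhds 0))
    (hcl : ∀ m t, |F t - fk m t| ≤ e m) : PseudoAPSeq F := by
  choose gk φk hgk hφk heqk using fun m => pap_decomp (hfk m)
  have hgdiff : ∀ m m' t, |gk m t - gk m' t| ≤ e m + e m' := by
    intro m m'
    apply ap_norm_le (ap_sub (hgk m) (hgk m')) (papzero_sub (hφk m) (hφk m'))
    intro t
    have h1 := hcl m t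
    have h2 := hcl m' t
    have h3 := heqk m t
    have h4 := heqk m' t
    have he' : (gk m t - gk m' t) + (φk m t - φk m' t) = (fk m t - F t) + (F t - fk m' t) := by
      linear_combination h4 - h3
    rw [he']
    calc |(fk m t - F t) + (F t - fk m' t)| ≤ |fk m t - F t| + |F t - fk m' t| := abs_add_le _ _
      _ ≤ e m + e m' := by
          rw [abs_sub_comm]
          exact add_le_add h1 h2
  have hcauchy : ∀ t : ℤ, CauchySeq (fun m => gk m t) := by
    intro t
    apply cauchySeq_of_le_tendsto_0 (b := fun m => 2 * e m)
    · intro m m' N hm hm'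
      rw [Real.dist_eq]
      calc |gk m t - gk m' t| ≤ e m + e m' := hgdiff m m' t
        _ ≤ 2 * e N := by
            have h1 := hmono N m hm
            have h2 := hmono N m' hm'
            linarith
    · simpa using hetd.const_mul 2
  choose G hG using fun t => cauchySeq_tendsto_of_complete (hcauchy t)
  have hGcl : ∀ m t, |G t - gk m t| ≤ e m := by
    intro m t
    apply le_of_forall_pos_le_add
    intro η hη
    have h1 : ∀ᶠ j in Filter.atTop, e j < η := hetd.eventually_lt_const hη
    have hev : ∀ᶠ j in Filter.atTop, |gk j t - gk m t| ≤ e m + η := by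
      filter_upwards [h1] with j hj
      calc |gk j t - gk m t| ≤ e j + e m := hgdiff j m t
        _ ≤ e m + η := by linarith
    have htdj : Filter.Tendsto (fun j => |gk j t - gk m t|) Filter.atTop
        (nhds |G t - gk m t|) := ((hG t).sub_const (gk m t)).abs
    exact le_of_tendsto htdj hev
  have hGap : APSequence G := by
    apply ap_unif_limit
    intro η hη
    obtain ⟨m, hm⟩ := (hetd.eventually_lt_const hη).exists
    exact ⟨gk m, hgk m, fun t => le_trans (hGcl m t) (le_of_lt hm)⟩
  have hΦcl : ∀ m t, |(F t - G t) - φk m t| ≤ 2 * e m := by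
    intro m t
    have h1 := hcl m t
    have h2 := hGcl m t
    have h3 := heqk m t
    have he' : (F t - G t) - φk m t = (F t - fk m t) + (gk m t - G t) := by
      linear_combination h3
    rw [he']
    calc |(F t - fk m t) + (gk m t - G t)| ≤ |F t - fk m t| + |gk m t - G t| := abs_add_le _ _
      _ ≤ e m + e m := by
          refine add_le_add h1 ?_
          rw [abs_sub_comm]
          exact h2
      _ = 2 * e m := by ring
  have hΦ : PAPZeroSeq (fun t => F t - G t) := by
    apply papzero_unif_limit
    · obtain ⟨C0, hC00, hC0⟩ := papzero_bound_nonneg (hφk 0)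
      refine ⟨2 * e 0 + C0, fun t => ?_⟩
      have h1 := hΦcl 0 t
      have h2 := hC0 t
      have h3 := abs_sub_abs_le_abs_sub (F t - G t) (φk 0 t)
      linarith
    · intro η hη
      obtain ⟨m, hm⟩ := (hetd.eventually_lt_const (by linarith : (0:ℝ) < η / 2)).exists
      exact ⟨φk m, hφk m, fun t => le_trans (hΦcl m t) (by linarith)⟩
  exact pap_mk hGap hΦ (fun t => by ring)

end S16

namespace S16

lemma abs_add6 (a1 a2 a3 a4 a5 a6 : ℝ) :
    |a1 + (a2 + a3 + a4 + a5 + a6)| ≤ |a1| + |a2| + |a3| + |a4| + |a5| + |a6| := by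
  have b1 := abs_add_le a1 (a2 + a3 + a4 + a5 + a6)
  have b2 := abs_add_le (a2 + a3 + a4 + a5) a6
  have b3 := abs_add_le (a2 + a3 + a4) a5
  have b4 := abs_add_le (a2 + a3) a4
  have b5 := abs_add_le a2 a3
  linarith

lemma abs_add5 (a2 a3 a4 a5 a6 : ℝ) :
    |a2 + a3 + a4 + a5 + a6| ≤ |a2| + |a3| + |a4| + |a5| + |a6| := by
  have b2 := abs_add_le (a2 + a3 + a4 + a5) a6
  have b3 := abs_add_le (a2 + a3 + a4) a5
  have b4 := abs_add_le (a2 + a3) a4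
  have b5 := abs_add_le a2 a3
  linarith

end S16



open S16

set_option maxHeartbeats 3000000

/-- Discrete-time case of the paper's main existence theorem: under
hypotheses (H1)–(H4), the neutral high-order Hopfield difference system on `ℤ` has a
unique pseudo almost periodic solution `x` with
`sup_t max_i max {|xᵢ(t)|, |∇xᵢ(t)|} ≤ r`. -/
theorem stmt16 (n : ℕ)
    (c : Fin n → ℤ → ℝ) (δ : Fin n → ℤ → ℕ) (I : Fin n → ℤ → ℝ)
    (a b d : Fin n → Fin n → ℤ → ℝ) (τ σ : Fin n → Fin n → ℤ → ℕ)
    (T : Fin n → Fin n → Fin n → ℤ → ℝ) (ξ ζ : Fin n → Fin n → Fin n → ℤ → ℕ)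
    (f g h k : Fin n → ℝ → ℝ)
    (cm cp Ip : Fin n → ℝ) (δp : Fin n → ℕ)
    (ap bp dp : Fin n → Fin n → ℝ) (τp σp : Fin n → Fin n → ℕ)
    (Tp : Fin n → Fin n → Fin n → ℝ) (ξp ζp : Fin n → Fin n → Fin n → ℕ)
    (Lf Lg Lh Lk : Fin n → ℝ)
    (ρ : Fin n → ℝ) (r : ℝ)
    -- (H1)
    (hc : ∀ i, APSequence (c i))
    (hcm : ∀ i, IsGLB (Set.range (c i)) (cm i)) (hcm0 : ∀ i, 0 < cm i)
    (hcp : ∀ i, IsLUB (Set.range (c i)) (cp i))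
    -- (H2)
    (ha : ∀ i j, APSequence (a i j))
    (hap : ∀ i j, IsLUB (Set.range fun t => |a i j t|) (ap i j))
    (hb : ∀ i j, APSequence (b i j))
    (hbp : ∀ i j, IsLUB (Set.range fun t => |b i j t|) (bp i j))
    (hd : ∀ i j, APSequence (d i j))
    (hdp : ∀ i j, IsLUB (Set.range fun t => |d i j t|) (dp i j))
    (hT : ∀ i j l, APSequence (T i j l))
    (hTp : ∀ i j l, IsLUB (Set.range fun t => |T i j l t|) (Tp i j l))
    (hδ : ∀ i, APSequence (fun t => (δ i t : ℝ)))
    (hδp : ∀ i, IsLUB (Set.range (δ i)) (δp i))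
    (hτ : ∀ i j, APSequence (fun t => (τ i j t : ℝ)))
    (hτp : ∀ i j, IsLUB (Set.range (τ i j)) (τp i j))
    (hσ : ∀ i j, APSequence (fun t => (σ i j t : ℝ)))
    (hσp : ∀ i j, IsLUB (Set.range (σ i j)) (σp i j))
    (hξ : ∀ i j l, APSequence (fun t => (ξ i j l t : ℝ)))
    (hξp : ∀ i j l, IsLUB (Set.range (ξ i j l)) (ξp i j l))
    (hζ : ∀ i j l, APSequence (fun t => (ζ i j l t : ℝ)))
    (hζp : ∀ i j l, IsLUB (Set.range (ζ i j l)) (ζp i j l))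
    (hI : ∀ i, PseudoAPSeq (I i))
    (hIp : ∀ i, IsLUB (Set.range fun t => |I i t|) (Ip i))
    -- (H3)
    (hLf : ∀ j, 0 ≤ Lf j) (hLipf : ∀ j (x y : ℝ), |f j x - f j y| ≤ Lf j * |x - y|)
    (hf0 : ∀ j, f j 0 = 0)
    (hLg : ∀ j, 0 ≤ Lg j) (hLipg : ∀ j (x y : ℝ), |g j x - g j y| ≤ Lg j * |x - y|)
    (hg0 : ∀ j, g j 0 = 0)
    (hLh : ∀ j, 0 ≤ Lh j) (hLiph : ∀ j (x y : ℝ), |h j x - h j y| ≤ Lh j * |x - y|)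
    (hh0 : ∀ j, h j 0 = 0)
    (hLk : ∀ j, 0 ≤ Lk j) (hLipk : ∀ j (x y : ℝ), |k j x - k j y| ≤ Lk j * |x - y|)
    (hk0 : ∀ j, k j 0 = 0)
    -- (H4)
    (hr : 0 < r)
    (hρ : ∀ i, ρ i =
      (cp i * (δp i : ℝ) + (∑ j, ap i j * Lf j) + (∑ j, bp i j * Lg j)
        + (∑ j, dp i j * (σp i j : ℝ) * Lh j)
        + 2 * r * ∑ j, ∑ l, Tp i j l * Lk j * Lk l) * r)
    (hH4a : ∀ i j l : Fin n,
      max (ρ i / cm i) ((cp i + cm i) / cm i * ρ i)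
        + max (Ip j / cm j) ((cp l + cm l) / cm l * Ip l) ≤ r)
    (hH4b : ∀ i, 0 < ρ i / r ∧ ρ i / r < cm i / (cp i + cm i)
        ∧ cm i / (cp i + cm i) < cm i)
    :
    ∃ x : Fin n → ℤ → ℝ,
      IsPAPSolutionZ n c δ I a b d τ σ T ξ ζ f g h k r x ∧
      ∀ y : Fin n → ℤ → ℝ,
        IsPAPSolutionZ n c δ I a b d τ σ T ξ ζ f g h k r y → y = x := by
  classical
  rcases Nat.eq_zero_or_pos n with hn0 | hnpos
  · subst hn0
    refine ⟨fun i => i.elim0, ⟨fun i => i.elim0, fun i t => i.elim0, fun i t => i.elim0⟩, ?_⟩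
    intro y _
    funext i
    exact i.elim0
  haveI : Nonempty (Fin n) := ⟨⟨0, hnpos⟩⟩
  have hrne : r ≠ 0 := ne_of_gt hr
  -- pointwise bounds from the LUB/GLB hypotheses
  have hcmle : ∀ i t, cm i ≤ c i t := fun i t => (hcm i).1 ⟨t, rfl⟩
  have hcple : ∀ i t, c i t ≤ cp i := fun i t => (hcp i).1 ⟨t, rfl⟩
  have hcmcp : ∀ i, cm i ≤ cp i := fun i => le_trans (hcmle i 0) (hcple i 0)
  have hcppos : ∀ i, 0 < cp i := fun i => lt_of_lt_of_le (hcm0 i) (hcmcp i)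
  have hcpcm_pos : ∀ i, 0 < cp i + cm i := fun i => by linarith [hcppos i, hcm0 i]
  have haple : ∀ i j t, |a i j t| ≤ ap i j := fun i j t => (hap i j).1 ⟨t, rfl⟩
  have hbple : ∀ i j t, |b i j t| ≤ bp i j := fun i j t => (hbp i j).1 ⟨t, rfl⟩
  have hdple : ∀ i j t, |d i j t| ≤ dp i j := fun i j t => (hdp i j).1 ⟨t, rfl⟩
  have hTple : ∀ i j l t, |T i j l t| ≤ Tp i j l := fun i j l t => (hTp i j l).1 ⟨t, rfl⟩
  have hIple : ∀ i t, |I i t| ≤ Ip i := fun i t => (hIp i).1 ⟨t, rfl⟩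
  have hδle : ∀ i t, δ i t ≤ δp i := fun i t => (hδp i).1 ⟨t, rfl⟩
  have hτle : ∀ i j t, τ i j t ≤ τp i j := fun i j t => (hτp i j).1 ⟨t, rfl⟩
  have hσle : ∀ i j t, σ i j t ≤ σp i j := fun i j t => (hσp i j).1 ⟨t, rfl⟩
  have hξle : ∀ i j l t, ξ i j l t ≤ ξp i j l := fun i j l t => (hξp i j l).1 ⟨t, rfl⟩
  have hζle : ∀ i j l t, ζ i j l t ≤ ζp i j l := fun i j l t => (hζp i j l).1 ⟨t, rfl⟩
  have hap0 : ∀ i j, 0 ≤ ap i j := fun i j => le_trans (abs_nonneg _) (haple i j 0)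
  have hbp0 : ∀ i j, 0 ≤ bp i j := fun i j => le_trans (abs_nonneg _) (hbple i j 0)
  have hdp0 : ∀ i j, 0 ≤ dp i j := fun i j => le_trans (abs_nonneg _) (hdple i j 0)
  have hTp0 : ∀ i j l, 0 ≤ Tp i j l := fun i j l => le_trans (abs_nonneg _) (hTple i j l 0)
  have hIp0 : ∀ i, 0 ≤ Ip i := fun i => le_trans (abs_nonneg _) (hIple i 0)
  have hcabs : ∀ i t, |c i t| ≤ cp i := by
    intro i t
    rw [abs_of_pos (lt_of_lt_of_le (hcm0 i) (hcmle i t))]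
    exact hcple i t
  have hρpos : ∀ i, 0 < ρ i := by
    intro i
    have h1 := (hH4b i).1
    have h2 := mul_pos h1 hr
    rwa [div_mul_cancel₀ _ hrne] at h2
  have hρr0 : ∀ i, 0 ≤ ρ i / r := fun i => le_of_lt (hH4b i).1
  have hone_lt : ∀ i, 1 < cp i + cm i := by
    intro i
    by_contra hle
    push_neg at hle
    have h3 := (hH4b i).2.2
    have h4 : cm i / (cp i + cm i) ≥ cm i / 1 := by
      apply div_le_div_of_nonneg_left (le_of_lt (hcm0 i)) (hcpcm_pos i) hle
    rw [div_one] at h4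
    linarith
  -- contraction constant
  set κ : ℝ := Finset.univ.sup' Finset.univ_nonempty
    (fun i => (cp i + cm i) / cm i * (ρ i / r)) with hκdef
  have hκi : ∀ i, (cp i + cm i) / cm i * (ρ i / r) ≤ κ := by
    intro i
    rw [hκdef]
    exact Finset.le_sup' (fun i => (cp i + cm i) / cm i * (ρ i / r)) (Finset.mem_univ i)
  have hκpos : 0 < κ := by
    obtain ⟨i0⟩ := (inferInstance : Nonempty (Fin n))
    refine lt_of_lt_of_le ?_ (hκi i0)
    have := (hH4b i0).1
    have := hcpcm_pos i0
    have := hcm0 i0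
    positivity
  have hκlt1 : κ < 1 := by
    rw [hκdef, Finset.sup'_lt_iff]
    intro i _
    have h1 := (hH4b i).2.1
    have h2 : (cp i + cm i) / cm i * (ρ i / r) < (cp i + cm i) / cm i * (cm i / (cp i + cm i)) := by
      apply mul_lt_mul_of_pos_left h1
      apply div_pos (hcpcm_pos i) (hcm0 i)
    have h3 : (cp i + cm i) / cm i * (cm i / (cp i + cm i)) = 1 := by
      rw [div_mul_div_comm, mul_comm (cp i + cm i) (cm i)]
      exact div_self (ne_of_gt (mul_pos (hcm0 i) (hcpcm_pos i)))
    linarith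
  have hκ0 : 0 ≤ κ := le_of_lt hκpos
  have hκi2 : ∀ i, ρ i / r / cm i ≤ κ := by
    intro i
    refine le_trans ?_ (hκi i)
    have h1 := hone_lt i
    have h2 := hρr0 i
    have h3 := hcm0 i
    have he : ρ i / r / cm i = 1 / cm i * (ρ i / r) := by ring
    rw [he]
    apply mul_le_mul_of_nonneg_right _ h2
    rw [div_le_div_iff₀ h3 h3]
    nlinarith
  -- the operators
  set Fop : (Fin n → ℤ → ℝ) → Fin n → ℤ → ℝ := fun x i t =>
    (∑ j, a i j t * f j (x j t)) + (∑ j, b i j t * g j (x j (t - τ i j t)))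
      + (∑ j, d i j t * ∑ s ∈ Finset.Icc (t - σ i j t + 1) t, h j (x j s - x j (s - 1)))
      + (∑ j, ∑ l, T i j l t * k j (x j (t - ξ i j l t)) * k l (x l (t - ζ i j l t)))
      + I i t with hFopdef
  set Hop : (Fin n → ℤ → ℝ) → Fin n → ℤ → ℝ := fun x i t =>
    c i t * (∑ s ∈ Finset.Icc (t - δ i t + 1) t, (x i s - x i (s - 1))) + Fop x i t
    with hHopdef
  set Φ : (Fin n → ℤ → ℝ) → Fin n → ℤ → ℝ := fun x i => S16.Op (c i) (Hop x i) with hΦdef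
  -- telescoping
  have htel : ∀ (z : ℤ → ℝ) (t : ℤ) (dd : ℕ),
      ∑ s ∈ Finset.Icc (t - (dd : ℤ) + 1) t, (z s - z (s - 1)) = z t - z (t - (dd : ℤ)) := by
    intro z t dd
    induction dd with
    | zero =>
      rw [show t - ((0 : ℕ) : ℤ) + 1 = t + 1 by push_cast; ring]
      rw [Finset.Icc_eq_empty (by omega)]
      simp
    | succ m ih =>
      have he : t - ((m + 1 : ℕ) : ℤ) + 1 = t - (m : ℤ) := by push_cast; ring
      rw [he, S16.Icc_insert_bot (t - (m : ℤ)) t (by omega),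
        Finset.sum_insert (by simp only [Finset.mem_Icc]; omega)]
      rw [ih]
      have he3 : t - (m : ℤ) - 1 = t - ((m + 1 : ℕ) : ℤ) := by push_cast; ring
      rw [he3]
      ring
  -- equivalence of the system with the recursion
  have hequiv : ∀ (x : Fin n → ℤ → ℝ) (i : Fin n) (t : ℤ),
      (x i t - x i (t - 1) = HopfieldRHSZ n c δ I a b d τ σ T ξ ζ f g h k x i t)
        ↔ ((1 + c i t) * x i t = x i (t - 1) + Hop x i t) := by
    intro x i t
    have ht := htel (x i) t (δ i t)
    simp only [hHopdef, hFopdef, HopfieldRHSZ]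
    rw [ht]
    constructor <;> intro hh <;> linear_combination hh
  -- (Q1) uniform bound for Hop on the r-ball
  have hQ1 : ∀ x : Fin n → ℤ → ℝ, (∀ j t, |x j t| ≤ r ∧ |x j t - x j (t - 1)| ≤ r) →
      ∀ i t, |Hop x i t| ≤ ρ i + Ip i := by
    intro x hx i t
    simp only [hHopdef, hFopdef]
    have hcard : ∀ (u : ℤ) (dd : ℕ), (Finset.Icc (u - (dd : ℤ) + 1) u).card = dd := by
      intro u dd
      rw [Int.card_Icc]
      omega
    have hwin : |∑ s ∈ Finset.Icc (t - (δ i t : ℤ) + 1) t, (x i s - x i (s - 1))|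
        ≤ (δp i : ℝ) * r := by
      calc |∑ s ∈ Finset.Icc (t - (δ i t : ℤ) + 1) t, (x i s - x i (s - 1))|
          ≤ ∑ s ∈ Finset.Icc (t - (δ i t : ℤ) + 1) t, |x i s - x i (s - 1)| :=
            Finset.abs_sum_le_sum_abs _ _
        _ ≤ (Finset.Icc (t - (δ i t : ℤ) + 1) t).card • r :=
            Finset.sum_le_card_nsmul _ _ _ (fun s _ => (hx i s).2)
        _ = ((δ i t : ℝ)) * r := by rw [nsmul_eq_mul, hcard]
        _ ≤ (δp i : ℝ) * r := by
            apply mul_le_mul_of_nonneg_right _ (le_of_lt hr)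
            exact_mod_cast hδle i t
    have hterm0 : |c i t * (∑ s ∈ Finset.Icc (t - (δ i t : ℤ) + 1) t, (x i s - x i (s - 1)))|
        ≤ cp i * ((δp i : ℝ) * r) := by
      rw [abs_mul]
      exact mul_le_mul (hcabs i t) hwin (abs_nonneg _) (le_of_lt (hcppos i))
    have hS1 : |∑ j, a i j t * f j (x j t)| ≤ ∑ j, ap i j * (Lf j * r) := by
      refine le_trans (Finset.abs_sum_le_sum_abs _ _) (Finset.sum_le_sum fun j _ => ?_)
      rw [abs_mul]
      exact mul_le_mul (haple i j t)
        (lip_val (f j) (Lf j) (hLf j) (hLipf j) (hf0 j) (hx j t).1) (abs_nonneg _) (hap0 i j)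
    have hS2 : |∑ j, b i j t * g j (x j (t - τ i j t))| ≤ ∑ j, bp i j * (Lg j * r) := by
      refine le_trans (Finset.abs_sum_le_sum_abs _ _) (Finset.sum_le_sum fun j _ => ?_)
      rw [abs_mul]
      exact mul_le_mul (hbple i j t)
        (lip_val (g j) (Lg j) (hLg j) (hLipg j) (hg0 j) (hx j _).1) (abs_nonneg _) (hbp0 i j)
    have hS3 : |∑ j, d i j t * ∑ s ∈ Finset.Icc (t - (σ i j t : ℤ) + 1) t,
        h j (x j s - x j (s - 1))| ≤ ∑ j, dp i j * ((σp i j : ℝ) * (Lh j * r)) := by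
      refine le_trans (Finset.abs_sum_le_sum_abs _ _) (Finset.sum_le_sum fun j _ => ?_)
      rw [abs_mul]
      refine mul_le_mul (hdple i j t) ?_ (abs_nonneg _) (hdp0 i j)
      calc |∑ s ∈ Finset.Icc (t - (σ i j t : ℤ) + 1) t, h j (x j s - x j (s - 1))|
          ≤ ∑ s ∈ Finset.Icc (t - (σ i j t : ℤ) + 1) t, |h j (x j s - x j (s - 1))| :=
            Finset.abs_sum_le_sum_abs _ _
        _ ≤ (Finset.Icc (t - (σ i j t : ℤ) + 1) t).card • (Lh j * r) :=
            Finset.sum_le_card_nsmul _ _ _ (fun s _ =>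
              lip_val (h j) (Lh j) (hLh j) (hLiph j) (hh0 j) (hx j s).2)
        _ = ((σ i j t : ℝ)) * (Lh j * r) := by rw [nsmul_eq_mul, hcard]
        _ ≤ (σp i j : ℝ) * (Lh j * r) := by
            apply mul_le_mul_of_nonneg_right _ (mul_nonneg (hLh j) (le_of_lt hr))
            exact_mod_cast hσle i j t
    have hS4 : |∑ j, ∑ l, T i j l t * k j (x j (t - ξ i j l t)) * k l (x l (t - ζ i j l t))|
        ≤ ∑ j, ∑ l, Tp i j l * (Lk j * r) * (Lk l * r) := by
      refine le_trans (Finset.abs_sum_le_sum_abs _ _) (Finset.sum_le_sum fun j _ => ?_)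
      refine le_trans (Finset.abs_sum_le_sum_abs _ _) (Finset.sum_le_sum fun l _ => ?_)
      rw [abs_mul, abs_mul]
      refine mul_le_mul (mul_le_mul (hTple i j l t)
        (lip_val (k j) (Lk j) (hLk j) (hLipk j) (hk0 j) (hx j _).1) (abs_nonneg _)
        (hTp0 i j l)) (lip_val (k l) (Lk l) (hLk l) (hLipk l) (hk0 l) (hx l _).1)
        (abs_nonneg _) ?_
      have := hLk j
      have := hTp0 i j l
      positivity
    have habs := S16.abs_add6
      (c i t * (∑ s ∈ Finset.Icc (t - (δ i t : ℤ) + 1) t, (x i s - x i (s - 1))))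
      (∑ j, a i j t * f j (x j t)) (∑ j, b i j t * g j (x j (t - τ i j t)))
      (∑ j, d i j t * ∑ s ∈ Finset.Icc (t - (σ i j t : ℤ) + 1) t, h j (x j s - x j (s - 1)))
      (∑ j, ∑ l, T i j l t * k j (x j (t - ξ i j l t)) * k l (x l (t - ζ i j l t))) (I i t)
    have hIt := hIple i t
    have hfin : cp i * ((δp i : ℝ) * r) + (∑ j, ap i j * (Lf j * r)) + (∑ j, bp i j * (Lg j * r))
        + (∑ j, dp i j * ((σp i j : ℝ) * (Lh j * r)))
        + (∑ j, ∑ l, Tp i j l * (Lk j * r) * (Lk l * r)) ≤ ρ i := by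
      rw [hρ i]
      have e1 : (∑ j, ap i j * (Lf j * r)) = (∑ j, ap i j * Lf j) * r := by
        rw [Finset.sum_mul]
        exact Finset.sum_congr rfl fun j _ => by ring
      have e2 : (∑ j, bp i j * (Lg j * r)) = (∑ j, bp i j * Lg j) * r := by
        rw [Finset.sum_mul]
        exact Finset.sum_congr rfl fun j _ => by ring
      have e3 : (∑ j, dp i j * ((σp i j : ℝ) * (Lh j * r)))
          = (∑ j, dp i j * (σp i j : ℝ) * Lh j) * r := by
        rw [Finset.sum_mul]
        exact Finset.sum_congr rfl fun j _ => by ring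
      have e4 : (∑ j, ∑ l, Tp i j l * (Lk j * r) * (Lk l * r))
          = (∑ j, ∑ l, Tp i j l * Lk j * Lk l) * (r * r) := by
        rw [Finset.sum_mul]
        refine Finset.sum_congr rfl fun j _ => ?_
        rw [Finset.sum_mul]
        exact Finset.sum_congr rfl fun l _ => by ring
      have hnn : 0 ≤ ∑ j, ∑ l, Tp i j l * Lk j * Lk l :=
        Finset.sum_nonneg fun j _ => Finset.sum_nonneg fun l _ => by
          have := hTp0 i j l
          have := hLk j
          have := hLk l
          positivity
      rw [e1, e2, e3, e4]
      nlinarith [mul_nonneg hnn (mul_pos hr hr).le]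
    linarith
  -- (Q2) Lipschitz estimate for Hop on the r-ball
  have hα : ∀ i, ρ i / r = cp i * (δp i : ℝ) + (∑ j, ap i j * Lf j) + (∑ j, bp i j * Lg j)
      + (∑ j, dp i j * (σp i j : ℝ) * Lh j)
      + 2 * r * ∑ j, ∑ l, Tp i j l * Lk j * Lk l := by
    intro i
    rw [hρ i, mul_div_assoc, div_self hrne, mul_one]
  have hQ2 : ∀ (x y : Fin n → ℤ → ℝ) (M : ℝ), 0 ≤ M →
      (∀ j t, |x j t| ≤ r) → (∀ j t, |y j t| ≤ r) →
      (∀ j t, |x j t - y j t| ≤ M) →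
      (∀ j t, |(x j t - x j (t - 1)) - (y j t - y j (t - 1))| ≤ M) →
      ∀ i t, |Hop x i t - Hop y i t| ≤ ρ i / r * M := by
    intro x y M hM hxr hyr hd1 hd2 i t
    simp only [hHopdef, hFopdef]
    have hcard : ∀ (u : ℤ) (dd : ℕ), (Finset.Icc (u - (dd : ℤ) + 1) u).card = dd := by
      intro u dd
      rw [Int.card_Icc]
      omega
    have hA0 : |c i t * (∑ s ∈ Finset.Icc (t - (δ i t : ℤ) + 1) t, (x i s - x i (s - 1)))
        - c i t * (∑ s ∈ Finset.Icc (t - (δ i t : ℤ) + 1) t, (y i s - y i (s - 1)))|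
        ≤ cp i * ((δp i : ℝ) * M) := by
      rw [← mul_sub, abs_mul]
      refine mul_le_mul (hcabs i t) ?_ (abs_nonneg _) (le_of_lt (hcppos i))
      rw [← Finset.sum_sub_distrib]
      calc |∑ s ∈ Finset.Icc (t - (δ i t : ℤ) + 1) t,
            ((x i s - x i (s - 1)) - (y i s - y i (s - 1)))|
          ≤ ∑ s ∈ Finset.Icc (t - (δ i t : ℤ) + 1) t,
            |(x i s - x i (s - 1)) - (y i s - y i (s - 1))| := Finset.abs_sum_le_sum_abs _ _
        _ ≤ (Finset.Icc (t - (δ i t : ℤ) + 1) t).card • M :=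
            Finset.sum_le_card_nsmul _ _ _ (fun s _ => hd2 i s)
        _ = ((δ i t : ℝ)) * M := by rw [nsmul_eq_mul, hcard]
        _ ≤ (δp i : ℝ) * M := by
            apply mul_le_mul_of_nonneg_right _ hM
            exact_mod_cast hδle i t
    have hD1 : |(∑ j, a i j t * f j (x j t)) - (∑ j, a i j t * f j (y j t))|
        ≤ ∑ j, ap i j * (Lf j * M) := by
      rw [← Finset.sum_sub_distrib]
      refine le_trans (Finset.abs_sum_le_sum_abs _ _) (Finset.sum_le_sum fun j _ => ?_)
      rw [← mul_sub, abs_mul]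
      refine mul_le_mul (haple i j t) ?_ (abs_nonneg _) (hap0 i j)
      exact le_trans (hLipf j _ _) (mul_le_mul_of_nonneg_left (hd1 j t) (hLf j))
    have hD2 : |(∑ j, b i j t * g j (x j (t - τ i j t)))
        - (∑ j, b i j t * g j (y j (t - τ i j t)))| ≤ ∑ j, bp i j * (Lg j * M) := by
      rw [← Finset.sum_sub_distrib]
      refine le_trans (Finset.abs_sum_le_sum_abs _ _) (Finset.sum_le_sum fun j _ => ?_)
      rw [← mul_sub, abs_mul]
      refine mul_le_mul (hbple i j t) ?_ (abs_nonneg _) (hbp0 i j)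
      exact le_trans (hLipg j _ _) (mul_le_mul_of_nonneg_left (hd1 j _) (hLg j))
    have hD3 : |(∑ j, d i j t * ∑ s ∈ Finset.Icc (t - (σ i j t : ℤ) + 1) t,
          h j (x j s - x j (s - 1)))
        - (∑ j, d i j t * ∑ s ∈ Finset.Icc (t - (σ i j t : ℤ) + 1) t,
          h j (y j s - y j (s - 1)))| ≤ ∑ j, dp i j * ((σp i j : ℝ) * (Lh j * M)) := by
      rw [← Finset.sum_sub_distrib]
      refine le_trans (Finset.abs_sum_le_sum_abs _ _) (Finset.sum_le_sum fun j _ => ?_)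
      rw [← mul_sub, abs_mul]
      refine mul_le_mul (hdple i j t) ?_ (abs_nonneg _) (hdp0 i j)
      rw [← Finset.sum_sub_distrib]
      calc |∑ s ∈ Finset.Icc (t - (σ i j t : ℤ) + 1) t,
            (h j (x j s - x j (s - 1)) - h j (y j s - y j (s - 1)))|
          ≤ ∑ s ∈ Finset.Icc (t - (σ i j t : ℤ) + 1) t,
            |h j (x j s - x j (s - 1)) - h j (y j s - y j (s - 1))| :=
            Finset.abs_sum_le_sum_abs _ _
        _ ≤ (Finset.Icc (t - (σ i j t : ℤ) + 1) t).card • (Lh j * M) :=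
            Finset.sum_le_card_nsmul _ _ _ (fun s _ =>
              le_trans (hLiph j _ _) (mul_le_mul_of_nonneg_left (hd2 j s) (hLh j)))
        _ = ((σ i j t : ℝ)) * (Lh j * M) := by rw [nsmul_eq_mul, hcard]
        _ ≤ (σp i j : ℝ) * (Lh j * M) := by
            apply mul_le_mul_of_nonneg_right _ (mul_nonneg (hLh j) hM)
            exact_mod_cast hσle i j t
    have hD4 : |(∑ j, ∑ l, T i j l t * k j (x j (t - ξ i j l t)) * k l (x l (t - ζ i j l t)))
        - (∑ j, ∑ l, T i j l t * k j (y j (t - ξ i j l t)) * k l (y l (t - ζ i j l t)))|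
        ≤ ∑ j, ∑ l, (Tp i j l * ((Lk j * M) * (Lk l * r))
          + Tp i j l * ((Lk j * r) * (Lk l * M))) := by
      rw [← Finset.sum_sub_distrib]
      refine le_trans (Finset.abs_sum_le_sum_abs _ _) (Finset.sum_le_sum fun j _ => ?_)
      rw [← Finset.sum_sub_distrib]
      refine le_trans (Finset.abs_sum_le_sum_abs _ _) (Finset.sum_le_sum fun l _ => ?_)
      have hsp : T i j l t * k j (x j (t - ξ i j l t)) * k l (x l (t - ζ i j l t))
          - T i j l t * k j (y j (t - ξ i j l t)) * k l (y l (t - ζ i j l t))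
          = T i j l t * ((k j (x j (t - ξ i j l t)) - k j (y j (t - ξ i j l t)))
              * k l (x l (t - ζ i j l t)))
            + T i j l t * (k j (y j (t - ξ i j l t))
              * (k l (x l (t - ζ i j l t)) - k l (y l (t - ζ i j l t)))) := by ring
      rw [hsp]
      refine le_trans (abs_add_le _ _) ?_
      have hb1 : |T i j l t * ((k j (x j (t - ξ i j l t)) - k j (y j (t - ξ i j l t)))
          * k l (x l (t - ζ i j l t)))| ≤ Tp i j l * ((Lk j * M) * (Lk l * r)) := by
        rw [abs_mul, abs_mul]
        refine mul_le_mul (hTple i j l t) ?_ (mul_nonneg (abs_nonneg _) (abs_nonneg _))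
          (hTp0 i j l)
        refine mul_le_mul ?_ (lip_val (k l) (Lk l) (hLk l) (hLipk l) (hk0 l) (hxr l _))
          (abs_nonneg _) (mul_nonneg (hLk j) hM)
        exact le_trans (hLipk j _ _) (mul_le_mul_of_nonneg_left (hd1 j _) (hLk j))
      have hb2 : |T i j l t * (k j (y j (t - ξ i j l t))
          * (k l (x l (t - ζ i j l t)) - k l (y l (t - ζ i j l t))))|
          ≤ Tp i j l * ((Lk j * r) * (Lk l * M)) := by
        rw [abs_mul, abs_mul]
        refine mul_le_mul (hTple i j l t) ?_ (mul_nonneg (abs_nonneg _) (abs_nonneg _))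
          (hTp0 i j l)
        refine mul_le_mul (lip_val (k j) (Lk j) (hLk j) (hLipk j) (hk0 j) (hyr j _)) ?_
          (abs_nonneg _) (mul_nonneg (hLk j) (le_of_lt hr))
        exact le_trans (hLipk l _ _) (mul_le_mul_of_nonneg_left (hd1 l _) (hLk l))
      linarith
    have hfin : cp i * ((δp i : ℝ) * M) + (∑ j, ap i j * (Lf j * M)) + (∑ j, bp i j * (Lg j * M))
        + (∑ j, dp i j * ((σp i j : ℝ) * (Lh j * M)))
        + (∑ j, ∑ l, (Tp i j l * ((Lk j * M) * (Lk l * r))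
          + Tp i j l * ((Lk j * r) * (Lk l * M)))) = ρ i / r * M := by
      rw [hα i]
      have e1 : (∑ j, ap i j * (Lf j * M)) = (∑ j, ap i j * Lf j) * M := by
        rw [Finset.sum_mul]
        exact Finset.sum_congr rfl fun j _ => by ring
      have e2 : (∑ j, bp i j * (Lg j * M)) = (∑ j, bp i j * Lg j) * M := by
        rw [Finset.sum_mul]
        exact Finset.sum_congr rfl fun j _ => by ring
      have e3 : (∑ j, dp i j * ((σp i j : ℝ) * (Lh j * M)))
          = (∑ j, dp i j * (σp i j : ℝ) * Lh j) * M := by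
        rw [Finset.sum_mul]
        exact Finset.sum_congr rfl fun j _ => by ring
      have e4 : (∑ j, ∑ l, (Tp i j l * ((Lk j * M) * (Lk l * r))
          + Tp i j l * ((Lk j * r) * (Lk l * M))))
          = (∑ j, ∑ l, Tp i j l * Lk j * Lk l) * (2 * r * M) := by
        rw [Finset.sum_mul]
        refine Finset.sum_congr rfl fun j _ => ?_
        rw [Finset.sum_mul]
        exact Finset.sum_congr rfl fun l _ => by ring
      rw [e1, e2, e3, e4]
      ring
    have hsplit : (c i t * (∑ s ∈ Finset.Icc (t - (δ i t : ℤ) + 1) t, (x i s - x i (s - 1)))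
        + ((∑ j, a i j t * f j (x j t)) + (∑ j, b i j t * g j (x j (t - τ i j t)))
          + (∑ j, d i j t * ∑ s ∈ Finset.Icc (t - (σ i j t : ℤ) + 1) t,
            h j (x j s - x j (s - 1)))
          + (∑ j, ∑ l, T i j l t * k j (x j (t - ξ i j l t)) * k l (x l (t - ζ i j l t)))
          + I i t))
        - (c i t * (∑ s ∈ Finset.Icc (t - (δ i t : ℤ) + 1) t, (y i s - y i (s - 1)))
        + ((∑ j, a i j t * f j (y j t)) + (∑ j, b i j t * g j (y j (t - τ i j t)))
          + (∑ j, d i j t * ∑ s ∈ Finset.Icc (t - (σ i j t : ℤ) + 1) t,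
            h j (y j s - y j (s - 1)))
          + (∑ j, ∑ l, T i j l t * k j (y j (t - ξ i j l t)) * k l (y l (t - ζ i j l t)))
          + I i t))
        = (c i t * (∑ s ∈ Finset.Icc (t - (δ i t : ℤ) + 1) t, (x i s - x i (s - 1)))
            - c i t * (∑ s ∈ Finset.Icc (t - (δ i t : ℤ) + 1) t, (y i s - y i (s - 1))))
          + ((∑ j, a i j t * f j (x j t)) - (∑ j, a i j t * f j (y j t)))
          + ((∑ j, b i j t * g j (x j (t - τ i j t))) - (∑ j, b i j t * g j (y j (t - τ i j t))))
          + ((∑ j, d i j t * ∑ s ∈ Finset.Icc (t - (σ i j t : ℤ) + 1) t,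
              h j (x j s - x j (s - 1)))
            - (∑ j, d i j t * ∑ s ∈ Finset.Icc (t - (σ i j t : ℤ) + 1) t,
              h j (y j s - y j (s - 1))))
          + ((∑ j, ∑ l, T i j l t * k j (x j (t - ξ i j l t)) * k l (x l (t - ζ i j l t)))
            - (∑ j, ∑ l, T i j l t * k j (y j (t - ξ i j l t)) * k l (y l (t - ζ i j l t)))) := by
      ring
    rw [hsplit]
    refine le_trans (S16.abs_add5 _ _ _ _ _) ?_
    linarith
  -- (Q3) ball invariance of Φ
  have hQ3 : ∀ x : Fin n → ℤ → ℝ, (∀ j t, |x j t| ≤ r ∧ |x j t - x j (t - 1)| ≤ r) →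
      ∀ i t, |Φ x i t| ≤ r ∧ |Φ x i t - Φ x i (t - 1)| ≤ r := by
    intro x hx i t
    have hH := hQ1 x hx i
    have hb1 : ∀ u, |Φ x i u| ≤ (ρ i + Ip i) / cm i := by
      intro u
      simp only [hΦdef]
      exact Op_bound (hcm0 i) (hcmle i) hH u
    have hrec : (1 + c i t) * Φ x i t = Φ x i (t - 1) + Hop x i t := by
      simp only [hΦdef]
      exact Op_rec (hcm0 i) (hcmle i) hH t
    have hgrad : Φ x i t - Φ x i (t - 1) = Hop x i t - c i t * Φ x i t := by
      linear_combination hrec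
    have hH4 := hH4a i i i
    have hmax1 : ρ i / cm i ≤ max (ρ i / cm i) ((cp i + cm i) / cm i * ρ i) := le_max_left _ _
    have hmax2 : Ip i / cm i ≤ max (Ip i / cm i) ((cp i + cm i) / cm i * Ip i) := le_max_left _ _
    have hmax3 : (cp i + cm i) / cm i * ρ i
        ≤ max (ρ i / cm i) ((cp i + cm i) / cm i * ρ i) := le_max_right _ _
    have hmax4 : (cp i + cm i) / cm i * Ip i
        ≤ max (Ip i / cm i) ((cp i + cm i) / cm i * Ip i) := le_max_right _ _
    constructor
    · refine le_trans (hb1 t) ?_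
      rw [add_div]
      linarith
    · rw [hgrad]
      have h0 := abs_add_le (Hop x i t) (-(c i t * Φ x i t))
      rw [abs_neg] at h0
      have h0' : |Hop x i t - c i t * Φ x i t| ≤ |Hop x i t| + |c i t * Φ x i t| := by
        rw [sub_eq_add_neg]
        exact h0
      have h2 : |c i t * Φ x i t| ≤ cp i * ((ρ i + Ip i) / cm i) := by
        rw [abs_mul]
        exact mul_le_mul (hcabs i t) (hb1 t) (abs_nonneg _) (le_of_lt (hcppos i))
      have he2 : (ρ i + Ip i) + cp i * ((ρ i + Ip i) / cm i)
          = (cp i + cm i) / cm i * ρ i + (cp i + cm i) / cm i * Ip i := by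
        field_simp [ne_of_gt (hcm0 i)]
        ring
      have h3 := hH t
      linarith
  -- (Q4) contraction of Φ
  have hQ4 : ∀ (x y : Fin n → ℤ → ℝ) (M : ℝ), 0 ≤ M →
      (∀ j t, |x j t| ≤ r ∧ |x j t - x j (t - 1)| ≤ r) →
      (∀ j t, |y j t| ≤ r ∧ |y j t - y j (t - 1)| ≤ r) →
      (∀ j t, |x j t - y j t| ≤ M) →
      (∀ j t, |(x j t - x j (t - 1)) - (y j t - y j (t - 1))| ≤ M) →
      ∀ i t, |Φ x i t - Φ y i t| ≤ κ * M ∧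
        |(Φ x i t - Φ x i (t - 1)) - (Φ y i t - Φ y i (t - 1))| ≤ κ * M := by
    intro x y M hM hx hy hd1 hd2 i t
    have hHx := hQ1 x hx i
    have hHy := hQ1 y hy i
    have hHd : ∀ u, |Hop x i u - Hop y i u| ≤ ρ i / r * M :=
      fun u => hQ2 x y M hM (fun j t => (hx j t).1) (fun j t => (hy j t).1) hd1 hd2 i u
    have hsub : ∀ u, Φ x i u - Φ y i u = S16.Op (c i) (fun v => Hop x i v - Hop y i v) u := by
      intro u
      simp only [hΦdef]
      rw [Op_sub (hcm0 i) (hcmle i) hHx hHy u]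
    have hval : ∀ u, |Φ x i u - Φ y i u| ≤ ρ i / r * M / cm i := by
      intro u
      rw [hsub u]
      exact Op_bound (hcm0 i) (hcmle i) hHd u
    have hvalκ : ∀ u, |Φ x i u - Φ y i u| ≤ κ * M := by
      intro u
      refine le_trans (hval u) ?_
      have he : ρ i / r * M / cm i = (ρ i / r / cm i) * M := by ring
      rw [he]
      exact mul_le_mul_of_nonneg_right (hκi2 i) hM
    refine ⟨hvalκ t, ?_⟩
    have hrx : (1 + c i t) * Φ x i t = Φ x i (t - 1) + Hop x i t := by
      simp only [hΦdef]
      exact Op_rec (hcm0 i) (hcmle i) hHx t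
    have hry : (1 + c i t) * Φ y i t = Φ y i (t - 1) + Hop y i t := by
      simp only [hΦdef]
      exact Op_rec (hcm0 i) (hcmle i) hHy t
    have hidr : (Φ x i t - Φ x i (t - 1)) - (Φ y i t - Φ y i (t - 1))
        = (Hop x i t - Hop y i t) - c i t * (Φ x i t - Φ y i t) := by
      linear_combination hrx - hry
    rw [hidr]
    have h0 := abs_add_le (Hop x i t - Hop y i t) (-(c i t * (Φ x i t - Φ y i t)))
    rw [abs_neg] at h0
    have h0' : |(Hop x i t - Hop y i t) - c i t * (Φ x i t - Φ y i t)|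
        ≤ |Hop x i t - Hop y i t| + |c i t * (Φ x i t - Φ y i t)| := by
      rw [sub_eq_add_neg]
      exact h0
    have h2 : |c i t * (Φ x i t - Φ y i t)| ≤ cp i * (ρ i / r * M / cm i) := by
      rw [abs_mul]
      exact mul_le_mul (hcabs i t) (hval t) (abs_nonneg _) (le_of_lt (hcppos i))
    have hfin : ρ i / r * M + cp i * (ρ i / r * M / cm i)
        = (cp i + cm i) / cm i * (ρ i / r) * M := by
      field_simp [hrne, ne_of_gt (hcm0 i)]
      ring
    have hκb : (cp i + cm i) / cm i * (ρ i / r) * M ≤ κ * M :=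
      mul_le_mul_of_nonneg_right (hκi i) hM
    have h3 := hHd t
    linarith
  -- (Q5) Hop preserves pseudo almost periodicity
  have hQ5 : ∀ x : Fin n → ℤ → ℝ,
      (∀ j, PseudoAPSeq (x j) ∧ PseudoAPSeq (fun t => x j t - x j (t - 1))) →
      ∀ i, PseudoAPSeq (Hop x i) := by
    intro x hxpap i
    simp only [hHopdef, hFopdef]
    refine pap_add (pap_mul (pap_of_ap (hc i))
      (pap_window (hxpap i).2 (δ i) (hδ i) (δp i) (hδle i))) ?_
    refine pap_add (pap_add (pap_add (pap_add ?_ ?_) ?_) ?_) (hI i)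
    · exact pap_finset_sum Finset.univ _ (fun j _ => pap_mul (pap_of_ap (ha i j))
        (pap_lipcomp (f j) (Lf j) (hLf j) (hLipf j) (hxpap j).1))
    · exact pap_finset_sum Finset.univ _ (fun j _ => pap_mul (pap_of_ap (hb i j))
        (pap_lipcomp (g j) (Lg j) (hLg j) (hLipg j)
          (pap_delay (hxpap j).1 (τ i j) (hτ i j) (τp i j) (hτle i j))))
    · exact pap_finset_sum Finset.univ _ (fun j _ => pap_mul (pap_of_ap (hd i j))
        (pap_window (pap_lipcomp (h j) (Lh j) (hLh j) (hLiph j) (hxpap j).2)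
          (σ i j) (hσ i j) (σp i j) (hσle i j)))
    · exact pap_finset_sum Finset.univ _ (fun j _ => pap_finset_sum Finset.univ _ (fun l _ =>
        pap_mul (pap_mul (pap_of_ap (hT i j l))
          (pap_lipcomp (k j) (Lk j) (hLk j) (hLipk j)
            (pap_delay (hxpap j).1 (ξ i j l) (hξ i j l) (ξp i j l) (hξle i j l))))
          (pap_lipcomp (k l) (Lk l) (hLk l) (hLipk l)
            (pap_delay (hxpap l).1 (ζ i j l) (hζ i j l) (ζp i j l) (hζle i j l)))))
  -- (Q6) Φ preserves pseudo almost periodicity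
  have hQ6 : ∀ x : Fin n → ℤ → ℝ,
      (∀ j, PseudoAPSeq (x j) ∧ PseudoAPSeq (fun t => x j t - x j (t - 1))) →
      (∀ j t, |x j t| ≤ r ∧ |x j t - x j (t - 1)| ≤ r) →
      ∀ i, PseudoAPSeq (Φ x i) ∧ PseudoAPSeq (fun t => Φ x i t - Φ x i (t - 1)) := by
    intro x hxpap hxb i
    have hHpap := hQ5 x hxpap i
    have hΦpap : PseudoAPSeq (Φ x i) := by
      simp only [hΦdef]
      exact pap_Op (hcm0 i) (hcmle i) (hc i) hHpap
    refine ⟨hΦpap, ?_⟩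
    have hH := hQ1 x hxb i
    have he : (fun t => Φ x i t - Φ x i (t - 1)) = fun t => Hop x i t - c i t * Φ x i t := by
      funext t
      have hrec : (1 + c i t) * Φ x i t = Φ x i (t - 1) + Hop x i t := by
        simp only [hΦdef]
        exact Op_rec (hcm0 i) (hcmle i) hH t
      linear_combination hrec
    rw [he]
    exact pap_sub hHpap (pap_mul (pap_of_ap (hc i)) hΦpap)
  -- Picard iteration
  obtain ⟨X, hX0, hXs⟩ : ∃ X : ℕ → Fin n → ℤ → ℝ,
      X 0 = (fun _ _ => 0) ∧ ∀ m, X (m + 1) = Φ (X m) :=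
    ⟨fun m => Nat.rec (fun _ _ => 0) (fun _ xm => Φ xm) m, rfl, fun _ => rfl⟩
  have hX0' : ∀ j t, X 0 j t = 0 := fun j t => by rw [hX0]
  have hXball : ∀ m, ∀ j t, |X m j t| ≤ r ∧ |X m j t - X m j (t - 1)| ≤ r := by
    intro m
    induction m with
    | zero =>
      intro j t
      rw [hX0']
      rw [hX0']
      constructor <;> simpa using le_of_lt hr
    | succ m ih =>
      rw [hXs m]
      exact hQ3 (X m) ih
  have hXpap : ∀ m, ∀ j, PseudoAPSeq (X m j) ∧
      PseudoAPSeq (fun t => X m j t - X m j (t - 1)) := by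
    intro m
    induction m with
    | zero =>
      intro j
      constructor
      · have he : X 0 j = fun _ => (0 : ℝ) := by funext t; rw [hX0']
        rw [he]
        exact pap_of_ap (ap_const 0)
      · have he : (fun t => X 0 j t - X 0 j (t - 1)) = fun _ => (0 : ℝ) := by
          funext t
          rw [hX0', hX0']
          ring
        rw [he]
        exact pap_of_ap (ap_const 0)
    | succ m ih =>
      rw [hXs m]
      exact hQ6 (X m) ih (hXball m)
  have hXdiff : ∀ m, ∀ j t, |X (m + 1) j t - X m j t| ≤ κ ^ m * r ∧
      |(X (m + 1) j t - X (m + 1) j (t - 1)) - (X m j t - X m j (t - 1))| ≤ κ ^ m * r := by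
    intro m
    induction m with
    | zero =>
      intro j t
      have h1 := hXball 1 j t
      constructor
      · rw [hX0']
        simpa using h1.1
      · rw [hX0', hX0']
        have e : X 1 j t - X 1 j (t - 1) - (0 - 0) = X 1 j t - X 1 j (t - 1) := by ring
        rw [e]
        simpa using h1.2
    | succ m ih =>
      intro j t
      have h := hQ4 (X (m + 1)) (X m) (κ ^ m * r)
        (mul_nonneg (pow_nonneg hκ0 m) (le_of_lt hr)) (hXball (m + 1)) (hXball m)
        (fun j t => (ih j t).1) (fun j t => (ih j t).2) j t
      rw [hXs m] at h
      rw [hXs (m + 1), hXs m]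
      have he : κ * (κ ^ m * r) = κ ^ (m + 1) * r := by
        rw [pow_succ]
        ring
      constructor
      · exact le_trans h.1 (le_of_eq he)
      · exact le_trans h.2 (le_of_eq he)
  -- limits
  have h1κ : (0 : ℝ) < 1 - κ := by linarith
  have hgeo : Summable (fun m : ℕ => κ ^ m * r) :=
    (summable_geometric_of_lt_one hκ0 hκlt1).mul_right r
  set xsol : Fin n → ℤ → ℝ := fun j t => ∑' m : ℕ, (X (m + 1) j t - X m j t) with hxsoldef
  have hxs : ∀ j t, xsol j t = ∑' m : ℕ, (X (m + 1) j t - X m j t) := fun j t => rfl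
  have hsumm : ∀ j t, Summable (fun m : ℕ => X (m + 1) j t - X m j t) := by
    intro j t
    apply Summable.of_norm_bounded hgeo
    intro m
    rw [Real.norm_eq_abs]
    exact (hXdiff m j t).1
  have hpartial : ∀ j t (m : ℕ), ∑ u ∈ Finset.range m, (X (u + 1) j t - X u j t) = X m j t := by
    intro j t m
    rw [Finset.sum_range_sub (fun u => X u j t), hX0']
    ring
  set F : ℕ → ℝ := fun m => κ ^ m * (r * (1 - κ)⁻¹) with hFdef
  have hF0 : ∀ m, 0 ≤ F m := by
    intro m
    simp only [hFdef]
    exact mul_nonneg (pow_nonneg hκ0 m)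
      (mul_nonneg (le_of_lt hr) (le_of_lt (inv_pos.mpr h1κ)))
  have htailF : ∀ (m : ℕ) j t, |xsol j t - X m j t| ≤ F m := by
    intro m j t
    have h1 := Summable.sum_add_tsum_nat_add m (hsumm j t)
    rw [hpartial j t m] at h1
    have hx := hxs j t
    have h2 : xsol j t - X m j t = ∑' u : ℕ, (X (u + m + 1) j t - X (u + m) j t) := by
      linear_combination hx - h1
    rw [h2]
    have hs2 : Summable (fun u : ℕ => X (u + m + 1) j t - X (u + m) j t) :=
      (hsumm j t).comp_injective (add_left_injective m)
    have hgeo2 : Summable (fun u : ℕ => κ ^ (u + m) * r) :=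
      hgeo.comp_injective (add_left_injective m)
    have hb : ‖∑' u : ℕ, (X (u + m + 1) j t - X (u + m) j t)‖
        ≤ ∑' u : ℕ, ‖X (u + m + 1) j t - X (u + m) j t‖ := by
      apply norm_tsum_le_tsum_norm
      apply hs2.abs
    rw [Real.norm_eq_abs] at hb
    refine le_trans hb ?_
    have hle : ∑' u : ℕ, |X (u + m + 1) j t - X (u + m) j t| ≤ ∑' u : ℕ, κ ^ (u + m) * r := by
      apply Summable.tsum_le_tsum _ hs2.abs hgeo2
      intro u
      exact (hXdiff (u + m) j t).1
    refine le_trans hle (le_of_eq ?_)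
    calc ∑' u : ℕ, κ ^ (u + m) * r = ∑' u : ℕ, κ ^ m * (κ ^ u * r) :=
        tsum_congr (fun u => by rw [pow_add]; ring)
      _ = κ ^ m * ∑' u : ℕ, κ ^ u * r := tsum_mul_left
      _ = F m := by
          rw [tsum_mul_right, tsum_geometric_of_lt_one hκ0 hκlt1]
          simp only [hFdef]
          ring
  set E : ℕ → ℝ := fun m => 2 * F m with hEdef
  have hE0 : ∀ m, 0 ≤ E m := by
    intro m
    simp only [hEdef]
    linarith [hF0 m]
  have hFmono : ∀ m m' : ℕ, m ≤ m' → F m' ≤ F m := by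
    intro m m' hmm
    simp only [hFdef]
    exact mul_le_mul_of_nonneg_right (pow_le_pow_of_le_one hκ0 (le_of_lt hκlt1) hmm)
      (mul_nonneg (le_of_lt hr) (le_of_lt (inv_pos.mpr h1κ)))
  have hEmono : ∀ m m' : ℕ, m ≤ m' → E m' ≤ E m := by
    intro m m' hmm
    simp only [hEdef]
    linarith [hFmono m m' hmm]
  have hFtd : Filter.Tendsto F Filter.atTop (nhds 0) := by
    have hp := tendsto_pow_atTop_nhds_zero_of_lt_one hκ0 hκlt1
    have h2 := hp.mul_const (r * (1 - κ)⁻¹)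
    simpa [hFdef] using h2
  have hEtd : Filter.Tendsto E Filter.atTop (nhds 0) := by
    have h2 := hFtd.const_mul 2
    simpa [hEdef] using h2
  have htail1 : ∀ (m : ℕ) j t, |xsol j t - X m j t| ≤ E m := by
    intro m j t
    refine le_trans (htailF m j t) ?_
    simp only [hEdef]
    linarith [hF0 m]
  have htail2 : ∀ (m : ℕ) j t,
      |(xsol j t - xsol j (t - 1)) - (X m j t - X m j (t - 1))| ≤ E m := by
    intro m j t
    have h1 := htailF m j t
    have h2 := htailF m j (t - 1)
    have h4 := abs_add_le (xsol j t - X m j t) (-(xsol j (t - 1) - X m j (t - 1)))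
    rw [abs_neg] at h4
    have he : (xsol j t - xsol j (t - 1)) - (X m j t - X m j (t - 1))
        = (xsol j t - X m j t) + -(xsol j (t - 1) - X m j (t - 1)) := by ring
    rw [he]
    simp only [hEdef]
    linarith
  have hxsolball : ∀ j t, |xsol j t| ≤ r ∧ |xsol j t - xsol j (t - 1)| ≤ r := by
    intro j t
    constructor
    · apply le_limit_bound hEtd
      intro m
      have h1 := htail1 m j t
      have h2 := (hXball m j t).1
      have h3 := abs_sub_abs_le_abs_sub (xsol j t) (X m j t)
      linarith
    · apply le_limit_bound hEtd
      intro m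
      have h1 := htail2 m j t
      have h2 := (hXball m j t).2
      have h3 := abs_sub_abs_le_abs_sub (xsol j t - xsol j (t - 1)) (X m j t - X m j (t - 1))
      linarith
  have hxsolpap : ∀ j, PseudoAPSeq (xsol j) ∧
      PseudoAPSeq (fun t => xsol j t - xsol j (t - 1)) := by
    intro j
    constructor
    · exact pap_unif_limit (xsol j) (fun m => X m j) E (fun m => (hXpap m j).1) hE0
        hEmono hEtd (fun m t => htail1 m j t)
    · exact pap_unif_limit _ (fun m t => X m j t - X m j (t - 1)) E
        (fun m => (hXpap m j).2) hE0 hEmono hEtd (fun m t => htail2 m j t)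
  have hfix : ∀ i t, Φ xsol i t = xsol i t := by
    intro i t
    have htd : Filter.Tendsto (fun m => κ * E m + E (m + 1)) Filter.atTop (nhds 0) := by
      have ht1 := hEtd.const_mul κ
      have ht2 := hEtd.comp (Filter.tendsto_add_atTop_nat 1)
      have h3 := ht1.add ht2
      simpa [Function.comp] using h3
    have hbnd : ∀ m : ℕ, |Φ xsol i t - xsol i t| ≤ κ * E m + E (m + 1) := by
      intro m
      have hQ := (hQ4 xsol (X m) (E m) (hE0 m) hxsolball (hXball m)
        (fun j t => htail1 m j t) (fun j t => htail2 m j t) i t).1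
      have h4 : |Φ xsol i t - X (m + 1) i t| ≤ κ * E m := by
        rw [hXs m]
        exact hQ
      have h2 : |X (m + 1) i t - xsol i t| ≤ E (m + 1) := by
        rw [abs_sub_comm]
        exact htail1 (m + 1) i t
      have h3 := abs_sub_le (Φ xsol i t) (X (m + 1) i t) (xsol i t)
      linarith
    have hz := eq_of_abs_le_tendsto htd hbnd
    linarith
  have hxsoleq : ∀ i t, xsol i t - xsol i (t - 1)
      = HopfieldRHSZ n c δ I a b d τ σ T ξ ζ f g h k xsol i t := by
    intro i t
    rw [hequiv xsol i t]
    have hrec : (1 + c i t) * Φ xsol i t = Φ xsol i (t - 1) + Hop xsol i t := by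
      simp only [hΦdef]
      exact Op_rec (hcm0 i) (hcmle i) (hQ1 xsol hxsolball i) t
    rw [← hfix i t, ← hfix i (t - 1)]
    exact hrec
  refine ⟨xsol, ⟨hxsolpap, hxsolball, hxsoleq⟩, ?_⟩
  -- uniqueness
  intro y hy
  obtain ⟨hypap, hyb, hyeq⟩ := hy
  have hyrec : ∀ i t, (1 + c i t) * y i t = y i (t - 1) + Hop y i t :=
    fun i t => (hequiv y i t).mp (hyeq i t)
  have hyfix : ∀ i t, y i t = Φ y i t := by
    intro i t
    simp only [hΦdef]
    exact Op_unique (hcm0 i) (hcmle i) (hQ1 y hyb i) (fun u => (hyb i u).1) (hyrec i) t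
  have hbdd : BddAbove (Set.range (fun p : Fin n × ℤ =>
      max |y p.1 p.2 - xsol p.1 p.2|
        |(y p.1 p.2 - y p.1 (p.2 - 1)) - (xsol p.1 p.2 - xsol p.1 (p.2 - 1))|)) := by
    refine ⟨4 * r, ?_⟩
    rintro s ⟨p, rfl⟩
    apply max_le
    · have h1 := (hyb p.1 p.2).1
      have h2 := (hxsolball p.1 p.2).1
      have h3 := abs_sub (y p.1 p.2) (xsol p.1 p.2)
      linarith
    · have h1 := (hyb p.1 p.2).2
      have h2 := (hxsolball p.1 p.2).2
      have h3 := abs_sub (y p.1 p.2 - y p.1 (p.2 - 1)) (xsol p.1 p.2 - xsol p.1 (p.2 - 1))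
      linarith
  set M : ℝ := sSup (Set.range (fun p : Fin n × ℤ =>
      max |y p.1 p.2 - xsol p.1 p.2|
        |(y p.1 p.2 - y p.1 (p.2 - 1)) - (xsol p.1 p.2 - xsol p.1 (p.2 - 1))|)) with hMdef
  have hMel1 : ∀ i t, |y i t - xsol i t| ≤ M := by
    intro i t
    refine le_trans (le_max_left _ _) (le_csSup hbdd ⟨(i, t), rfl⟩)
  have hMel2 : ∀ i t, |(y i t - y i (t - 1)) - (xsol i t - xsol i (t - 1))| ≤ M := by
    intro i t
    refine le_trans (le_max_right _ _) (le_csSup hbdd ⟨(i, t), rfl⟩)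
  have hM0 : 0 ≤ M := le_trans (abs_nonneg _) (hMel1 ⟨0, hnpos⟩ 0)
  have hMκ : M ≤ κ * M := by
    have hne : (Set.range (fun p : Fin n × ℤ =>
        max |y p.1 p.2 - xsol p.1 p.2|
          |(y p.1 p.2 - y p.1 (p.2 - 1)) - (xsol p.1 p.2 - xsol p.1 (p.2 - 1))|)).Nonempty :=
      ⟨_, ⟨(⟨0, hnpos⟩, 0), rfl⟩⟩
    rw [hMdef]
    apply csSup_le hne
    rintro s ⟨⟨i, t⟩, rfl⟩
    have hQ := hQ4 y xsol M hM0 hyb hxsolball hMel1 hMel2 i t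
    apply max_le
    · rw [hyfix i t, ← hfix i t]
      exact hQ.1
    · rw [hyfix i t, hyfix i (t - 1), ← hfix i t, ← hfix i (t - 1)]
      exact hQ.2
  have hMz : M ≤ 0 := by nlinarith
  funext i t
  have h1 := hMel1 i t
  have h2 : |y i t - xsol i t| ≤ 0 := le_trans h1 hMz
  have h3 : y i t - xsol i t = 0 := abs_nonpos_iff.mp h2
  linarith
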